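/- arXiv:1906.11545 — 4 statements merged into one kernel-verified Lean document; each statement's English description precedes it below -/
import Mathlib

section
/- For the 3-web (x,y,f) with f(x,y) = x + y + xy(x-y)·k(x,y), the Blaschke curvature at the origin is nonzero if and only if k(0,0) ≠ 0. -/
/-- The Blaschke curvature function of the planar 3-web `(x, y, f)`:
`K(x,y) = ∂ₓ∂_y (log (∂ₓ f / ∂_y f))`. -/
noncomputable def blaschkeCurvature (f : ℝ → ℝ → ℝ) (x y : ℝ) : ℝ :=
  deriv (fun x' : ℝ =>
    deriv (fun y' : ℝ =>
      Real.log (deriv (fun s : ℝ => f s y') x' / deriv (fun s : ℝ => f x' s) y')) y) x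

/-- For the 3-web `(x, y, f)` with `f(x,y) = x + y + x y (x - y) k(x,y)` (with `k` analytic),
the Blaschke curvature at the origin is nonzero iff `k(0,0) ≠ 0`. -/
theorem blaschkeCurvature_normalForm_ne_zero_iff (k : ℝ → ℝ → ℝ)
    (hk : AnalyticAt ℝ (fun p : ℝ × ℝ => k p.1 p.2) 0) :
    blaschkeCurvature (fun x y : ℝ => x + y + x * y * (x - y) * k x y) 0 0 ≠ 0 ↔
      k 0 0 ≠ 0 := by
  set K2 : ℝ × ℝ → ℝ := fun p => k p.1 p.2 with hK2def
  obtain ⟨U, hUmem, hUo, hU0⟩ := eventually_nhds_iff.mp hk.eventually_analyticAt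
  have hUan : AnalyticOnNhd ℝ K2 U := fun p hp => hUmem p hp
  have hfdan : AnalyticOnNhd ℝ (fderiv ℝ K2) U := hUan.fderiv
  set k1 : ℝ × ℝ → ℝ := fun p => fderiv ℝ K2 p (1, 0) with hk1def
  set k2 : ℝ × ℝ → ℝ := fun p => fderiv ℝ K2 p (0, 1) with hk2def
  have hk1an : AnalyticOnNhd ℝ k1 U :=
    (ContinuousLinearMap.apply ℝ ℝ ((1 : ℝ), (0 : ℝ))).comp_analyticOnNhd hfdan
  have hk2an : AnalyticOnNhd ℝ k2 U :=
    (ContinuousLinearMap.apply ℝ ℝ ((0 : ℝ), (1 : ℝ))).comp_analyticOnNhd hfdan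
  -- partial derivative identities
  have hA : ∀ x y : ℝ, (x, y) ∈ U →
      deriv (fun s : ℝ => s + y + s * y * (s - y) * k s y) x
        = 1 + (2*x*y - y^2) * K2 (x, y) + (x^2*y - x*y^2) * k1 (x, y) := by
    intro x y hxy
    have hcurve : HasDerivAt (fun s : ℝ => (s, y)) ((1 : ℝ), (0 : ℝ)) x :=
      HasDerivAt.prodMk (hasDerivAt_id x) (hasDerivAt_const x y)
    have hkx : HasDerivAt (fun s : ℝ => K2 (s, y)) (k1 (x, y)) x :=
      ((hUan _ hxy).differentiableAt.hasFDerivAt).comp_hasDerivAt (f := fun s : ℝ => (s, y)) x hcurve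
    have h1 : HasDerivAt (fun s : ℝ => s * y * (s - y) * k s y)
        ((1 * y * (x - y) + x * y * 1) * K2 (x, y) + x * y * (x - y) * k1 (x, y)) x :=
      (((hasDerivAt_id x).mul_const y).mul ((hasDerivAt_id x).sub_const y)).mul hkx
    have htot : HasDerivAt (fun s : ℝ => s + y + s * y * (s - y) * k s y)
        (1 + ((1 * y * (x - y) + x * y * 1) * K2 (x, y) + x * y * (x - y) * k1 (x, y))) x :=
      ((hasDerivAt_id x).add_const y).add h1
    rw [htot.deriv]; ring
  have hB : ∀ x y : ℝ, (x, y) ∈ U →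
      deriv (fun s : ℝ => x + s + x * s * (x - s) * k x s) y
        = 1 + (x^2 - 2*x*y) * K2 (x, y) + (x^2*y - x*y^2) * k2 (x, y) := by
    intro x y hxy
    have hcurve : HasDerivAt (fun s : ℝ => (x, s)) ((0 : ℝ), (1 : ℝ)) y :=
      HasDerivAt.prodMk (hasDerivAt_const y x) (hasDerivAt_id y)
    have hky : HasDerivAt (fun s : ℝ => K2 (x, s)) (k2 (x, y)) y :=
      ((hUan _ hxy).differentiableAt.hasFDerivAt).comp_hasDerivAt y hcurve
    have h1 : HasDerivAt (fun s : ℝ => x * s * (x - s) * k x s)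
        ((x * 1 * (x - y) + x * y * (-1)) * K2 (x, y) + x * y * (x - y) * k2 (x, y)) y :=
      (((hasDerivAt_id y).const_mul x).mul ((hasDerivAt_id y).const_sub x)).mul hky
    have htot : HasDerivAt (fun s : ℝ => x + s + x * s * (x - s) * k x s)
        (1 + ((x * 1 * (x - y) + x * y * (-1)) * K2 (x, y) + x * y * (x - y) * k2 (x, y))) y := by
      have := ((hasDerivAt_id y).const_add x).add h1
      exact this.congr_deriv (by ring)
    rw [htot.deriv]; ring
  -- inner derivative
  have hinner : ∀ x : ℝ, (x, (0:ℝ)) ∈ U → 1 + x^2 * K2 (x, 0) ≠ 0 →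
      deriv (fun y' : ℝ => Real.log
        (deriv (fun s : ℝ => s + y' + s * y' * (s - y') * k s y') x /
         deriv (fun s : ℝ => x + s + x * s * (x - s) * k x s) y')) 0
      = (2*x*K2 (x,0) + x^2*k1 (x,0))
          - (2*x^2*k2 (x,0) - 2*x*K2 (x,0)) / (1 + x^2*K2 (x,0)) := by
    intro x hx hbV
    have hev : ∀ᶠ y in nhds (0:ℝ), (x, y) ∈ U := by
      have hc : ContinuousAt (fun y : ℝ => (x, y)) 0 :=
        continuousAt_const.prodMk continuousAt_id
      exact hc.preimage_mem_nhds (hUo.mem_nhds hx)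
    have heq : (fun y' : ℝ => Real.log
        (deriv (fun s : ℝ => s + y' + s * y' * (s - y') * k s y') x /
         deriv (fun s : ℝ => x + s + x * s * (x - s) * k x s) y'))
        =ᶠ[nhds 0] (fun y' : ℝ => Real.log
          ((1 + (2*x*y' - y'^2) * K2 (x, y') + (x^2*y' - x*y'^2) * k1 (x, y')) /
           (1 + (x^2 - 2*x*y') * K2 (x, y') + (x^2*y' - x*y'^2) * k2 (x, y')))) := by
      filter_upwards [hev] with y hy
      rw [hA x y hy, hB x y hy]
    rw [heq.deriv_eq]
    have hcurve : HasDerivAt (fun s : ℝ => (x, s)) ((0 : ℝ), (1 : ℝ)) 0 :=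
      HasDerivAt.prodMk (hasDerivAt_const 0 x) (hasDerivAt_id 0)
    have hK2y : HasDerivAt (fun yy : ℝ => K2 (x, yy)) (k2 (x, 0)) 0 :=
      ((hUan _ hx).differentiableAt.hasFDerivAt).comp_hasDerivAt 0 hcurve
    obtain ⟨m1, hm1⟩ : ∃ m, HasDerivAt (fun yy : ℝ => k1 (x, yy)) m 0 :=
      ⟨_, ((hk1an _ hx).differentiableAt.hasFDerivAt).comp_hasDerivAt 0 hcurve⟩
    obtain ⟨m2, hm2⟩ : ∃ m, HasDerivAt (fun yy : ℝ => k2 (x, yy)) m 0 :=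
      ⟨_, ((hk2an _ hx).differentiableAt.hasFDerivAt).comp_hasDerivAt 0 hcurve⟩
    have hAy := ((((((hasDerivAt_id (0:ℝ)).const_mul (2*x)).sub (hasDerivAt_pow 2 0)).mul
        hK2y).const_add 1).add
      ((((hasDerivAt_id (0:ℝ)).const_mul (x^2)).sub ((hasDerivAt_pow 2 0).const_mul x)).mul hm1))
    have hBy := ((((((hasDerivAt_id (0:ℝ)).const_mul (2*x)).const_sub (x^2)).mul
        hK2y).const_add 1).add
      ((((hasDerivAt_id (0:ℝ)).const_mul (x^2)).sub ((hasDerivAt_pow 2 0).const_mul x)).mul hm2))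
    have hB0 : (1 + (x^2 - 2*x*(0:ℝ)) * K2 (x, 0) + (x^2*0 - x*0^2) * k2 (x, 0)) ≠ 0 := by
      have : (1 + (x^2 - 2*x*(0:ℝ)) * K2 (x, 0) + (x^2*0 - x*0^2) * k2 (x, 0))
          = 1 + x^2 * K2 (x, 0) := by ring
      rw [this]; exact hbV
    have hA0 : (1 + (2*x*(0:ℝ) - 0^2) * K2 (x, 0) + (x^2*0 - x*0^2) * k1 (x, 0)) = 1 := by ring
    have hA0ne : (1 + (2*x*(0:ℝ) - 0^2) * K2 (x, 0) + (x^2*0 - x*0^2) * k1 (x, 0)) ≠ 0 := by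
      rw [hA0]; exact one_ne_zero
    simp only [id_eq, Pi.add_def, Pi.sub_def, Pi.mul_def] at hAy hBy
    have hlog := (hAy.div hBy hB0).log (div_ne_zero hA0ne hB0)
    simp only [Pi.div_def] at hlog
    rw [hlog.deriv]
    rw [hA0]
    rw [show (1 + (x^2 - 2*x*(0:ℝ)) * K2 (x, 0) + (x^2*0 - x*0^2) * k2 (x, 0)) = 1 + x^2 * K2 (x, 0) by ring]
    field_simp
    ring
  -- outer derivative
  have hcurve0 : HasDerivAt (fun x : ℝ => (x, (0:ℝ))) ((1 : ℝ), (0 : ℝ)) 0 :=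
    HasDerivAt.prodMk (hasDerivAt_id 0) (hasDerivAt_const 0 0)
  have hcx : HasDerivAt (fun x : ℝ => K2 (x, 0)) (k1 (0, 0)) 0 :=
    ((hUan _ hU0).differentiableAt.hasFDerivAt).comp_hasDerivAt (f := fun x : ℝ => (x, (0:ℝ))) 0 hcurve0
  have hc0 : ContinuousAt (fun x : ℝ => K2 (x, 0)) 0 := hcx.continuousAt
  have hbVcont : ContinuousAt (fun x : ℝ => 1 + x^2 * K2 (x, 0)) 0 :=
    continuousAt_const.add ((continuousAt_id.pow 2).mul hc0)
  have hbVev : ∀ᶠ x in nhds (0:ℝ), 1 + x^2 * K2 (x, 0) ≠ 0 :=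
    hbVcont.eventually_ne (by norm_num)
  have hUev : ∀ᶠ x in nhds (0:ℝ), (x, (0:ℝ)) ∈ U := by
    have hc : ContinuousAt (fun x : ℝ => (x, (0:ℝ))) 0 :=
      continuousAt_id.prodMk continuousAt_const
    exact hc.preimage_mem_nhds (hUo.mem_nhds hU0)
  have houter : (fun x : ℝ => deriv (fun y' : ℝ => Real.log
        (deriv (fun s : ℝ => s + y' + s * y' * (s - y') * k s y') x /
         deriv (fun s : ℝ => x + s + x * s * (x - s) * k x s) y')) 0)
      =ᶠ[nhds 0] (fun x : ℝ => (2*x*K2 (x,0) + x^2*k1 (x,0))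
          - (2*x^2*k2 (x,0) - 2*x*K2 (x,0)) / (1 + x^2*K2 (x,0))) := by
    filter_upwards [hUev, hbVev] with x h1 h2
    exact hinner x h1 h2
  -- derivatives along x ↦ (x, 0)
  obtain ⟨n1, hn1⟩ : ∃ m, HasDerivAt (fun x : ℝ => k1 (x, 0)) m 0 :=
    ⟨_, ((hk1an _ hU0).differentiableAt.hasFDerivAt).comp_hasDerivAt (f := fun x : ℝ => (x, (0:ℝ))) 0 hcurve0⟩
  obtain ⟨n2, hn2⟩ : ∃ m, HasDerivAt (fun x : ℝ => k2 (x, 0)) m 0 :=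
    ⟨_, ((hk2an _ hU0).differentiableAt.hasFDerivAt).comp_hasDerivAt (f := fun x : ℝ => (x, (0:ℝ))) 0 hcurve0⟩
  have hT := (((hasDerivAt_id (0:ℝ)).const_mul 2).mul hcx).add ((hasDerivAt_pow 2 0).mul hn1)
  have hN := (((hasDerivAt_pow 2 (0:ℝ)).const_mul 2).mul hn2).sub
    (((hasDerivAt_id (0:ℝ)).const_mul 2).mul hcx)
  have hD := ((hasDerivAt_pow 2 (0:ℝ)).mul hcx).const_add 1
  have hD0ne : (1 + (0:ℝ)^2 * K2 (0, 0)) ≠ 0 := by norm_num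
  have hg := hT.sub (hN.div hD hD0ne)
  simp only [id_eq, Pi.add_def, Pi.sub_def, Pi.mul_def, Pi.div_def] at hg
  have key : blaschkeCurvature (fun x y : ℝ => x + y + x * y * (x - y) * k x y) 0 0
      = 4 * k 0 0 := by
    show deriv (fun x' : ℝ => deriv (fun y' : ℝ => Real.log
        (deriv (fun s : ℝ => s + y' + s * y' * (s - y') * k s y') x' /
         deriv (fun s : ℝ => x' + s + x' * s * (x' - s) * k x' s) y')) 0) 0 = 4 * k 0 0
    rw [houter.deriv_eq, hg.deriv]
    have hkk : K2 (0, 0) = k 0 0 := rfl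
    rw [hkk]
    norm_num
    ring
  rw [key]
  constructor
  · intro h hk0
    exact h (by rw [hk0]; ring)
  · intro h
    exact mul_ne_zero (by norm_num) h
end

section
/- At the level of formal power series: given a formal series G(t) = 2t + d₂t² + ⋯ over a field of characteristic zero, there exists a unique formal series U(t) = t + u₂t² + ⋯ with G(U(t)) = U(2t), and the coefficients uₙ are determined recursively since 2ⁿ - 2 ≠ 0 for n ≥ 2. -/
open PowerSeries

lemma coeff_pow_congr {K : Type*} [Field K] {f g : PowerSeries K}
    (hf : constantCoeff f = 0) (hg : constantCoeff g = 0) {n : ℕ}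
    (h : ∀ i < n, coeff i f = coeff i g) :
    ∀ k m, m ≤ n → (m < n ∨ 2 ≤ k) → coeff m (f ^ k) = coeff m (g ^ k) := by
  intro k
  induction k with
  | zero => intro m _ _; simp
  | succ k ih =>
    intro m hmn hor
    rw [pow_succ, pow_succ, coeff_mul, coeff_mul]
    apply Finset.sum_congr rfl
    intro p hp
    rw [Finset.HasAntidiagonal.mem_antidiagonal] at hp
    rcases lt_or_eq_of_le hmn with hm | hm
    · have h1 : p.1 < n := lt_of_le_of_lt (le_trans (Nat.le.intro hp) (le_refl m)) hm
      have h2 : p.2 < n := lt_of_le_of_lt (le_trans (Nat.le.intro ((add_comm p.2 p.1).trans hp)) (le_refl m)) hm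
      rw [ih p.1 (le_of_lt (lt_of_lt_of_le h1 le_rfl)) (Or.inl h1), h p.2 h2]
    · -- m = n, so 2 ≤ k + 1
      have hk : 1 ≤ k := by
        rcases hor with h' | h'
        · omega
        · omega
      have hpn : p.1 + p.2 = n := by omega
      by_cases h2n : p.2 = n
      · have h1 : p.1 = 0 := by omega
        rw [h1]
        have : coeff 0 (f ^ k) = 0 := by
          rw [coeff_zero_eq_constantCoeff, map_pow, hf, zero_pow (by omega)]
        have hgg : coeff 0 (g ^ k) = 0 := by
          rw [coeff_zero_eq_constantCoeff, map_pow, hg, zero_pow (by omega)]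
        rw [this, hgg, zero_mul, zero_mul]
      · by_cases h1n : p.1 = n
        · have h2 : p.2 = 0 := by omega
          rw [h2, coeff_zero_eq_constantCoeff, hf, hg, mul_zero, mul_zero]
        · have h1 : p.1 < n := by omega
          have h2 : p.2 < n := by omega
          rw [ih p.1 (le_of_lt h1) (Or.inl h1), h p.2 h2]

noncomputable def kq {K : Type*} [Field K] (c : ℕ → K) (n : ℕ) : K :=
  if n = 0 then 0 else if n = 1 then 1 else
    (∑ k ∈ Finset.Icc 2 n, c k * PowerSeries.coeff n
      ((PowerSeries.mk fun i => if h : i < n then kq c i else 0) ^ k)) / (2 ^ n - 2)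
  decreasing_by exact h

/-- Formal Koenigs linearization: over a field of characteristic zero, for a formal
power series `G(t) = 2t + d₂t² + ⋯` there is a unique formal series
`U(t) = t + u₂t² + ⋯` with `G(U(t)) = U(2t)`; moreover `2ⁿ - 2 ≠ 0` for `n ≥ 2`,
which is what makes the coefficients recursively determined.
Since `U` has zero constant term, the composition `G(U(t))` is well defined: its
`n`-th coefficient is the `n`-th coefficient of `∑_{k ≤ n} (coeff k G)·Uᵏ`. -/
theorem formal_koenigs (K : Type*) [Field K] [CharZero K] (G : PowerSeries K)
    (hG0 : PowerSeries.constantCoeff G = 0)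
    (hG1 : PowerSeries.coeff 1 G = 2) :
    (∀ n : ℕ, 2 ≤ n → (2 : K) ^ n - 2 ≠ 0) ∧
    ∃! U : PowerSeries K,
      PowerSeries.constantCoeff U = 0 ∧ PowerSeries.coeff 1 U = 1 ∧
        ∀ n : ℕ,
          PowerSeries.coeff n
            (∑ k ∈ Finset.range (n + 1), PowerSeries.C (PowerSeries.coeff k G) * U ^ k)
            = PowerSeries.coeff n (PowerSeries.rescale (2 : K) U) := by
  have hpow : ∀ n : ℕ, 2 ≤ n → (2 : K) ^ n - 2 ≠ 0 := by
    intro n hn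
    have : ((2 ^ n - 2 : ℕ) : K) = (2 : K) ^ n - 2 := by
      have h2 : 2 ≤ 2 ^ n := by
        calc 2 ≤ n := hn
        _ ≤ 2 ^ n := Nat.lt_two_pow_self (n := n) |>.le
      push_cast [Nat.cast_sub h2]
      ring
    rw [← this]
    have : 2 ^ n - 2 ≠ 0 := by
      have : 2 ^ 2 ≤ 2 ^ n := Nat.pow_le_pow_right (by norm_num) hn
      omega
    exact_mod_cast this
  refine ⟨hpow, ?_⟩
  set c : ℕ → K := fun k => coeff k G with hc
  have hc0 : c 0 = 0 := by rw [hc]; simpa [coeff_zero_eq_constantCoeff] using hG0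
  have hc1 : c 1 = 2 := hG1
  set T : ℕ → PowerSeries K := fun n => PowerSeries.mk fun i => if h : i < n then kq c i else 0 with hT
  set U : PowerSeries K := PowerSeries.mk (kq c) with hU
  have kq0 : kq c 0 = 0 := by rw [kq]; simp
  have kq1 : kq c 1 = 1 := by rw [kq]; simp
  have kqn : ∀ n, 2 ≤ n → kq c n =
      (∑ k ∈ Finset.Icc 2 n, c k * coeff n ((T n) ^ k)) / (2 ^ n - 2) := by
    intro n hn
    rw [kq]
    simp only [hT]
    rw [if_neg (by omega), if_neg (by omega)]
  have hU0 : constantCoeff U = 0 := by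
    rw [← coeff_zero_eq_constantCoeff, hU, coeff_mk, kq0]
  have hU1 : coeff 1 U = 1 := by rw [hU, coeff_mk, kq1]
  have hT0 : ∀ n, constantCoeff (T n) = 0 := by
    intro n
    rw [← coeff_zero_eq_constantCoeff, hT]
    simp only [coeff_mk]
    split <;> simp [kq0]
  have hUT : ∀ n, ∀ i < n, coeff i U = coeff i (T n) := by
    intro n i hi
    rw [hU, hT, coeff_mk, coeff_mk, dif_pos hi]
  have hrange : ∀ n : ℕ, 2 ≤ n →
      Finset.range (n + 1) = insert 0 (insert 1 (Finset.Icc 2 n)) := by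
    intro n hn
    ext k
    simp only [Finset.mem_range, Finset.mem_insert, Finset.mem_Icc]
    omega
  -- generic LHS computation for any series with zero constant coefficient
  have heq : ∀ (W : PowerSeries K), constantCoeff W = 0 → ∀ n : ℕ, 2 ≤ n →
      coeff n (∑ k ∈ Finset.range (n + 1), C (c k) * W ^ k)
        = 2 * coeff n W + ∑ k ∈ Finset.Icc 2 n, c k * coeff n (W ^ k) := by
    intro W hW n hn
    rw [map_sum]
    have : ∀ k ∈ Finset.range (n + 1), coeff n (C (c k) * W ^ k)
        = c k * coeff n (W ^ k) := fun k _ => coeff_C_mul n (W ^ k) (c k)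
    rw [Finset.sum_congr rfl this, hrange n hn, Finset.sum_insert (by simp),
      Finset.sum_insert (by simp)]
    simp [hc0, hc1, pow_one]
  -- the tail sum only depends on coefficients below n
  have hSagree : ∀ (W1 W2 : PowerSeries K), constantCoeff W1 = 0 →
      constantCoeff W2 = 0 → ∀ n : ℕ, (∀ i < n, coeff i W1 = coeff i W2) →
      (∑ k ∈ Finset.Icc 2 n, c k * coeff n (W1 ^ k))
        = ∑ k ∈ Finset.Icc 2 n, c k * coeff n (W2 ^ k) := by
    intro W1 W2 h1 h2 n h
    refine Finset.sum_congr rfl fun k hk => ?_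
    rw [Finset.mem_Icc] at hk
    rw [coeff_pow_congr h1 h2 h k n le_rfl (Or.inr hk.1)]
  -- U satisfies the functional equation
  have hUeq : ∀ n : ℕ,
      coeff n (∑ k ∈ Finset.range (n + 1), C (c k) * U ^ k)
        = coeff n (rescale (2 : K) U) := by
    intro n
    rw [coeff_rescale]
    match n with
    | 0 => simp [hc0, hU, coeff_mk, kq0]
    | 1 =>
      rw [Finset.sum_range_succ, Finset.sum_range_one, map_add, coeff_C_mul, coeff_C_mul]
      simp [hc0, hc1, hU1]
    | (m + 2) =>
      have hn : 2 ≤ m + 2 := by omega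
      set n := m + 2
      rw [heq U hU0 n hn, hSagree U (T n) hU0 (hT0 n) n (hUT n)]
      have hcn : coeff n U = kq c n := by rw [hU, coeff_mk]
      rw [hcn, kqn n hn]
      have hD := hpow n hn
      field_simp
      ring
  refine ⟨U, ⟨hU0, hU1, hUeq⟩, ?_⟩
  rintro V ⟨hV0, hV1, hVeq⟩
  ext n
  induction n using Nat.strong_induction_on with
  | _ n ih =>
    match n with
    | 0 => rw [coeff_zero_eq_constantCoeff, hV0, hU0]
    | 1 => rw [hV1, hU1]
    | (m + 2) =>
      have hn : 2 ≤ m + 2 := by omega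
      set n := m + 2
      have e1 := hVeq n
      have e2 := hUeq n
      rw [coeff_rescale] at e1 e2
      rw [heq V hV0 n hn] at e1
      rw [heq U hU0 n hn] at e2
      rw [hSagree V U hV0 hU0 n (fun i hi => ih i (by omega))] at e1
      have : ((2:K) ^ n - 2) * coeff n V = ((2:K) ^ n - 2) * coeff n U := by
        rw [sub_mul, sub_mul]
        rw [← e1, ← e2]
        ring
      exact mul_left_cancel₀ (hpow n hn) this
end

section
/- In the ring of formal power series K[[x,y]] over a field K of characteristic 0, if a series S vanishes on the axes x = 0, y = 0 and on the diagonal x = y (i.e., S(x,0) = 0, S(0,y) = 0, S(t,t) = 0 as one-variable series), then S is divisible by xy(x-y). -/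
open MvPowerSeries

/-- In `K[[x,y]]` (char 0), a series vanishing on both axes and on the diagonal is
divisible by `x·y·(x-y)`. -/
theorem formal_divisibility (K : Type*) [Field K] [CharZero K]
    (S : MvPowerSeries (Fin 2) K)
    -- S(x,0) = 0 :
    (hx : ∀ d : Fin 2 →₀ ℕ, d 1 = 0 → MvPowerSeries.coeff d S = 0)
    -- S(0,y) = 0 :
    (hy : ∀ d : Fin 2 →₀ ℕ, d 0 = 0 → MvPowerSeries.coeff d S = 0)
    -- S(t,t) = 0 :
    (hd : ∀ n : ℕ, ∑ i ∈ Finset.range (n + 1),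
      MvPowerSeries.coeff (Finsupp.single (0 : Fin 2) i + Finsupp.single 1 (n - i)) S = 0) :
    ∃ T : MvPowerSeries (Fin 2) K,
      S = MvPowerSeries.X 0 * MvPowerSeries.X 1 *
        (MvPowerSeries.X 0 - MvPowerSeries.X 1) * T := by
  classical
  set c : ℕ → ℕ → K := fun i j =>
    MvPowerSeries.coeff (Finsupp.single (0 : Fin 2) i + Finsupp.single 1 j) S with hc
  -- truncated diagonal relation
  have hD : ∀ n : ℕ, ∑ k ∈ Finset.range (n + 1), c (k + 1) (n + 1 - k) = 0 := by
    intro n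
    have h := hd (n + 2)
    rw [Finset.sum_range_succ'] at h
    rw [Finset.sum_range_succ] at h
    have h0 : MvPowerSeries.coeff
        (Finsupp.single (0 : Fin 2) 0 + Finsupp.single 1 (n + 2 - 0)) S = 0 := by
      apply hy; simp
    have h2 : MvPowerSeries.coeff
        (Finsupp.single (0 : Fin 2) (n + 1 + 1) + Finsupp.single 1 (n + 2 - (n + 1 + 1))) S = 0 := by
      apply hx; simp [Finsupp.single_apply]
    rw [h0, h2, add_zero, add_zero] at h
    rw [← h]
    refine Finset.sum_congr rfl fun k _ => ?_
    have hk : n + 2 - (k + 1) = n + 1 - k := by omega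
    simp only [hc, hk]
  set T : MvPowerSeries (Fin 2) K := fun e =>
    -∑ k ∈ Finset.range (e 0 + 1), c (k + 1) (e 0 + e 1 + 2 - k) with hTdef
  have hT : ∀ e : Fin 2 →₀ ℕ, MvPowerSeries.coeff e T =
      -∑ k ∈ Finset.range (e 0 + 1), c (k + 1) (e 0 + e 1 + 2 - k) := fun e => rfl
  refine ⟨T, MvPowerSeries.ext fun d => ?_⟩
  have hm1 : (X 0 * X 1 * X 0 : MvPowerSeries (Fin 2) K)
      = monomial (Finsupp.single 0 2 + Finsupp.single 1 1) 1 := by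
    rw [X_def, X_def, monomial_mul_monomial, monomial_mul_monomial, one_mul, one_mul]
    have he : ((Finsupp.single 0 1 + Finsupp.single 1 1) + Finsupp.single 0 1 : Fin 2 →₀ ℕ)
        = Finsupp.single 0 2 + Finsupp.single 1 1 := by
      ext i; fin_cases i <;> simp [Finsupp.single_apply]
    rw [he]
  have hm2 : (X 0 * X 1 * X 1 : MvPowerSeries (Fin 2) K)
      = monomial (Finsupp.single 0 1 + Finsupp.single 1 2) 1 := by
    rw [X_def, X_def, monomial_mul_monomial, monomial_mul_monomial, one_mul, one_mul]
    have he : ((Finsupp.single 0 1 + Finsupp.single 1 1) + Finsupp.single 1 1 : Fin 2 →₀ ℕ)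
        = Finsupp.single 0 1 + Finsupp.single 1 2 := by
      ext i; fin_cases i <;> simp [Finsupp.single_apply]
    rw [he]
  have key : (X 0 * X 1 * (X 0 - X 1) : MvPowerSeries (Fin 2) K)
      = monomial (Finsupp.single 0 2 + Finsupp.single 1 1) 1
        - monomial (Finsupp.single 0 1 + Finsupp.single 1 2) 1 := by
    rw [mul_sub, hm1, hm2]
  rw [key, sub_mul, map_sub, coeff_monomial_mul, coeff_monomial_mul]
  have hrepr : d = Finsupp.single 0 (d 0) + Finsupp.single 1 (d 1) := by
    ext i; fin_cases i <;> simp [Finsupp.single_apply]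
  have hS : MvPowerSeries.coeff d S = c (d 0) (d 1) := by
    conv_lhs => rw [hrepr]
  have hle1 : ((Finsupp.single 0 2 + Finsupp.single 1 1 : Fin 2 →₀ ℕ) ≤ d)
      ↔ (2 ≤ d 0 ∧ 1 ≤ d 1) := by
    rw [Finsupp.le_def, Fin.forall_fin_two]
    simp [Finsupp.single_apply]
  have hle2 : ((Finsupp.single 0 1 + Finsupp.single 1 2 : Fin 2 →₀ ℕ) ≤ d)
      ↔ (1 ≤ d 0 ∧ 2 ≤ d 1) := by
    rw [Finsupp.le_def, Fin.forall_fin_two]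
    simp [Finsupp.single_apply]
  rw [hS, hT, hT]
  simp only [Finsupp.tsub_apply, Finsupp.add_apply, Finsupp.single_apply]
  norm_num
  set a := d 0 with ha
  set b := d 1 with hb
  simp only [hle1, hle2]
  clear_value a b
  clear hd hb ha
  match a, b with
  | 0, b =>
    have : c 0 b = 0 := by apply hy; simp
    simp [this]
  | a + 1, 0 =>
    have : c (a + 1) 0 = 0 := by apply hx; simp [Finsupp.single_apply]
    simp [this]
  | 1, 1 =>
    have h := hD 0
    rw [Finset.sum_range_one] at h
    simpa using h
  | 1, b + 2 =>
    rw [if_neg (show ¬(2 ≤ 1 ∧ 1 ≤ b + 2) by omega),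
      if_pos (show 1 ≤ 1 ∧ 2 ≤ b + 2 by omega)]
    simp [Finset.sum_range_one]
  | a + 2, 1 =>
    rw [if_pos (show 2 ≤ a + 2 ∧ 1 ≤ 1 by omega),
      if_neg (show ¬(1 ≤ a + 2 ∧ 2 ≤ 1) by omega)]
    have h := hD (a + 1)
    rw [Finset.sum_range_succ] at h
    have e1 : ∑ k ∈ Finset.range (a + 1), c (k + 1) (a + 1 + 1 - k)
        = ∑ k ∈ Finset.range (a + 2 - 2 + 1), c (k + 1) (a + 2 - 2 + (1 - 1) + 2 - k) := by
      refine Finset.sum_congr (by congr 1 <;> omega) fun k _ => ?_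
      congr 1 <;> omega
    rw [e1] at h
    have e2 : a + 1 + 1 - (a + 1) = 1 := by omega
    rw [e2] at h
    simp only [show a + 1 + 1 = a + 2 by omega] at h
    linear_combination h
  | a + 2, b + 2 =>
    rw [if_pos (show 2 ≤ a + 2 ∧ 1 ≤ b + 2 by omega),
      if_pos (show 1 ≤ a + 2 ∧ 2 ≤ b + 2 by omega)]
    have e1 : ∑ k ∈ Finset.range (a + 2 - 2 + 1), c (k + 1) (a + 2 - 2 + (b + 2 - 1) + 2 - k)
        = ∑ k ∈ Finset.range (a + 1), c (k + 1) (a + b + 3 - k) := by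
      refine Finset.sum_congr (by congr 1 <;> omega) fun k _ => ?_
      congr 1 <;> omega
    have e2 : ∑ k ∈ Finset.range (a + 2 - 1 + 1), c (k + 1) (a + 2 - 1 + (b + 2 - 2) + 2 - k)
        = ∑ k ∈ Finset.range (a + 1 + 1), c (k + 1) (a + b + 3 - k) := by
      refine Finset.sum_congr (by congr 1 <;> omega) fun k _ => ?_
      congr 1 <;> omega
    have e2' : ∑ k ∈ Finset.range (a + 1 + 1), c (k + 1) (a + b + 3 - k)
        = ∑ k ∈ Finset.range (a + 1), c (k + 1) (a + b + 3 - k) + c (a + 2) (b + 2) := by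
      rw [Finset.sum_range_succ, show a + 1 + 1 = a + 2 by omega,
        show a + b + 3 - (a + 1) = b + 2 by omega]
    rw [e1, e2.trans e2']
    ring
end

section
/- If a homography ψ of the projective plane maps a non-flat linear 3-web W onto a non-flat linear 3-web W̄ (sending leaves to leaves), then for every point M in the domain of W, car_W(M) = car_{W̄}(ψ(M)). -/
/-- Partial derivative in the second (`y`) variable. -/
noncomputable def pdy (F : ℝ × ℝ → ℝ) (M : ℝ × ℝ) : ℝ :=
  deriv (fun y : ℝ => F (M.1, y)) M.2

/-- Partial derivative in the first (`x`) variable. -/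
noncomputable def pdx (F : ℝ × ℝ → ℝ) (M : ℝ × ℝ) : ℝ :=
  deriv (fun x : ℝ => F (x, M.2)) M.1

/-- `Δ = (P-Q)R_y + (Q-R)P_y + (R-P)Q_y`. -/
noncomputable def webDelta (P Q R : ℝ × ℝ → ℝ) (M : ℝ × ℝ) : ℝ :=
  (P M - Q M) * pdy R M + (Q M - R M) * pdy P M + (R M - P M) * pdy Q M

/-- The characteristic `car = (P-Q)(Q-R)(R-P)·(P_yy + Q_yy + R_yy)/Δ²`. -/
noncomputable def webCar (P Q R : ℝ × ℝ → ℝ) (M : ℝ × ℝ) : ℝ :=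
  (P M - Q M) * (Q M - R M) * (R M - P M) *
    (pdy (pdy P) M + pdy (pdy Q) M + pdy (pdy R) M) / (webDelta P Q R M) ^ 2

set_option maxHeartbeats 4000000

lemma curve_x (x0 y0 : ℝ) : HasDerivAt (fun t : ℝ => (t, y0)) ((1:ℝ), (0:ℝ)) x0 :=
  (hasDerivAt_id x0).prodMk (hasDerivAt_const x0 y0)

lemma curve_y (x0 y0 : ℝ) : HasDerivAt (fun t : ℝ => (x0, t)) ((0:ℝ), (1:ℝ)) y0 :=
  (hasDerivAt_const y0 x0).prodMk (hasDerivAt_id y0)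

lemma hasDerivAt_comp_curve {E : Type*} [NormedAddCommGroup E] [NormedSpace ℝ E]
    {F : ℝ × ℝ → E} {φ : ℝ → ℝ × ℝ} {w : ℝ × ℝ} {t : ℝ}
    (hF : DifferentiableAt ℝ F (φ t)) (hφ : HasDerivAt φ w t) :
    HasDerivAt (fun s => F (φ s)) (fderiv ℝ F (φ t) w) t :=
  hF.hasFDerivAt.comp_hasDerivAt t hφ

lemma pdx_eq_fderiv {F : ℝ × ℝ → ℝ} {N : ℝ × ℝ} (h : DifferentiableAt ℝ F N) :
    pdx F N = fderiv ℝ F N (1, 0) := by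
  have h1 : HasDerivAt (fun t : ℝ => F (t, N.2)) (fderiv ℝ F N (1, 0)) N.1 := by
    have := hasDerivAt_comp_curve (φ := fun t : ℝ => (t, N.2)) (by simpa using h)
      (curve_x N.1 N.2)
    simpa using this
  exact h1.deriv

lemma pdy_eq_fderiv {F : ℝ × ℝ → ℝ} {N : ℝ × ℝ} (h : DifferentiableAt ℝ F N) :
    pdy F N = fderiv ℝ F N (0, 1) := by
  have h1 : HasDerivAt (fun t : ℝ => F (N.1, t)) (fderiv ℝ F N (0, 1)) N.2 := by
    have := hasDerivAt_comp_curve (φ := fun t : ℝ => (N.1, t)) (by simpa using h)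
      (curve_y N.1 N.2)
    simpa using this
  exact h1.deriv

lemma fderiv_apply_pd {F : ℝ × ℝ → ℝ} {N : ℝ × ℝ} (h : DifferentiableAt ℝ F N) (v : ℝ × ℝ) :
    fderiv ℝ F N v = v.1 * pdx F N + v.2 * pdy F N := by
  rw [pdx_eq_fderiv h, pdy_eq_fderiv h]
  have hv : v = v.1 • ((1:ℝ), (0:ℝ)) + v.2 • ((0:ℝ), (1:ℝ)) := by
    simp [Prod.ext_iff]
  rw [hv, map_add, map_smul, map_smul]
  simp [smul_eq_mul]

lemma hasDerivAt_comp_pd {F : ℝ × ℝ → ℝ} {φ : ℝ → ℝ × ℝ} {w : ℝ × ℝ} {t : ℝ}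
    (hF : DifferentiableAt ℝ F (φ t)) (hφ : HasDerivAt φ w t) :
    HasDerivAt (fun s => F (φ s)) (w.1 * pdx F (φ t) + w.2 * pdy F (φ t)) t := by
  have := hasDerivAt_comp_curve hF hφ
  rwa [fderiv_apply_pd hF] at this

lemma pdy_eventuallyEq {F : ℝ × ℝ → ℝ} {N0 : ℝ × ℝ} (h : AnalyticAt ℝ F N0) :
    pdy F =ᶠ[nhds N0] fun N => fderiv ℝ F N (0, 1) := by
  filter_upwards [h.eventually_analyticAt] with N hN using pdy_eq_fderiv hN.differentiableAt

lemma hasFDerivAt_fderiv_apply {F : ℝ × ℝ → ℝ} {N0 : ℝ × ℝ} (h : AnalyticAt ℝ F N0)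
    (v : ℝ × ℝ) :
    HasFDerivAt (fun N => fderiv ℝ F N v)
      ((ContinuousLinearMap.apply ℝ ℝ v).comp (fderiv ℝ (fderiv ℝ F) N0)) N0 :=
  (ContinuousLinearMap.apply ℝ ℝ v).hasFDerivAt.comp N0 h.fderiv.differentiableAt.hasFDerivAt

lemma pdy_hasFDerivAt {F : ℝ × ℝ → ℝ} {N0 : ℝ × ℝ} (h : AnalyticAt ℝ F N0) :
    HasFDerivAt (pdy F)
      ((ContinuousLinearMap.apply ℝ ℝ ((0:ℝ),(1:ℝ))).comp (fderiv ℝ (fderiv ℝ F) N0)) N0 :=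
  (hasFDerivAt_fderiv_apply h _).congr_of_eventuallyEq (pdy_eventuallyEq h)

lemma pdy_differentiableAt {F : ℝ × ℝ → ℝ} {N0 : ℝ × ℝ} (h : AnalyticAt ℝ F N0) :
    DifferentiableAt ℝ (pdy F) N0 :=
  (pdy_hasFDerivAt h).differentiableAt

lemma pdx_congr {F G : ℝ × ℝ → ℝ} {N0 : ℝ × ℝ} (h : F =ᶠ[nhds N0] G) :
    pdx F N0 = pdx G N0 := by
  apply Filter.EventuallyEq.deriv_eq
  have ht : Filter.Tendsto (fun t : ℝ => (t, N0.2)) (nhds N0.1) (nhds N0) := by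
    have := (continuous_id.prodMk (continuous_const (y := N0.2))).tendsto N0.1
    simpa using this
  exact h.comp_tendsto ht

lemma pdy_congr {F G : ℝ × ℝ → ℝ} {N0 : ℝ × ℝ} (h : F =ᶠ[nhds N0] G) :
    pdy F N0 = pdy G N0 := by
  apply Filter.EventuallyEq.deriv_eq
  have ht : Filter.Tendsto (fun t : ℝ => (N0.1, t)) (nhds N0.2) (nhds N0) := by
    have := ((continuous_const (y := N0.1)).prodMk continuous_id).tendsto N0.2
    simpa using this
  exact h.comp_tendsto ht

lemma pdx_pdy_symm {F : ℝ × ℝ → ℝ} {N0 : ℝ × ℝ} (h : AnalyticAt ℝ F N0) :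
    pdx (pdy F) N0 = pdy (pdx F) N0 := by
  have hsymm : ∀ v w : ℝ × ℝ, fderiv ℝ (fderiv ℝ F) N0 v w = fderiv ℝ (fderiv ℝ F) N0 w v := by
    intro v w
    apply second_derivative_symmetric_of_eventually
    · filter_upwards [h.eventually_analyticAt] with N hN using
        hN.differentiableAt.hasFDerivAt
    · exact h.fderiv.differentiableAt.hasFDerivAt
  have h1 : pdx (pdy F) N0 = fderiv ℝ (fderiv ℝ F) N0 (1, 0) (0, 1) := by
    rw [pdx_eq_fderiv (pdy_differentiableAt h), (pdy_hasFDerivAt h).fderiv]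
    rfl
  have h2 : pdy (pdx F) N0 = fderiv ℝ (fderiv ℝ F) N0 (0, 1) (1, 0) := by
    have hx : pdx F =ᶠ[nhds N0] fun N => fderiv ℝ F N (1, 0) := by
      filter_upwards [h.eventually_analyticAt] with N hN using pdx_eq_fderiv hN.differentiableAt
    have hdf : HasFDerivAt (pdx F)
        ((ContinuousLinearMap.apply ℝ ℝ ((1:ℝ),(0:ℝ))).comp (fderiv ℝ (fderiv ℝ F) N0)) N0 :=
      (hasFDerivAt_fderiv_apply h _).congr_of_eventuallyEq hx
    rw [pdy_eq_fderiv hdf.differentiableAt, hdf.fderiv]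
    rfl
  rw [h1, h2, hsymm]


lemma slope_transform (U : Set (ℝ × ℝ)) (hU : IsOpen U)
    (A : Matrix (Fin 3) (Fin 3) ℝ) (hA : IsUnit A.det)
    (ψ : ℝ × ℝ → ℝ × ℝ)
    (hden : ∀ M ∈ U, A 2 0 * M.1 + A 2 1 * M.2 + A 2 2 ≠ 0)
    (hψ : ∀ M ∈ U, ψ M =
      ((A 0 0 * M.1 + A 0 1 * M.2 + A 0 2) / (A 2 0 * M.1 + A 2 1 * M.2 + A 2 2),
       (A 1 0 * M.1 + A 1 1 * M.2 + A 1 2) / (A 2 0 * M.1 + A 2 1 * M.2 + A 2 2)))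
    (F F' : ℝ × ℝ → ℝ)
    (hF : AnalyticOnNhd ℝ F U) (hF' : AnalyticOnNhd ℝ F' (ψ '' U))
    (hlinF : ∀ M ∈ U, pdx F M + F M * pdy F M = 0)
    (hmapF : ∀ M ∈ U,
      (fderiv ℝ ψ M (1, F M)).2 = F' (ψ M) * (fderiv ℝ ψ M (1, F M)).1)
    (u0 u1 w0 w1 w2 w3 : ℝ)
    (hu0 : u0 = A 0 0 * A 2 1 - A 0 1 * A 2 0) (hu1 : u1 = A 1 0 * A 2 1 - A 1 1 * A 2 0)
    (hw0 : w0 = A 0 0 * A 2 2 - A 0 2 * A 2 0) (hw1 : w1 = A 0 1 * A 2 2 - A 0 2 * A 2 1)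
    (hw2 : w2 = A 1 0 * A 2 2 - A 1 2 * A 2 0) (hw3 : w3 = A 1 1 * A 2 2 - A 1 2 * A 2 1) :
    ∀ M ∈ U, (((u0 * M.2 + w0) + (-u0 * M.1 + w1) * F M) ≠ 0) ∧
      F' (ψ M) = ((u1 * M.2 + w2) + (-u1 * M.1 + w3) * F M) / ((u0 * M.2 + w0) + (-u0 * M.1 + w1) * F M) ∧
      pdy F' (ψ M) = (A 2 0 * M.1 + A 2 1 * M.2 + A 2 2) * ((A 2 0 * M.1 + A 2 1 * M.2 + A 2 2) * A.det * pdy F M + u1 * ((u0 * M.2 + w0) + (-u0 * M.1 + w1) * F M) - u0 * ((u1 * M.2 + w2) + (-u1 * M.1 + w3) * F M)) / (((u0 * M.2 + w0) + (-u0 * M.1 + w1) * F M) * A.det) ∧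
      pdy (pdy F') (ψ M) = (A 2 0 * M.1 + A 2 1 * M.2 + A 2 2) ^ 3 * pdy (pdy F) M / A.det := by
  have hdet0 : A.det ≠ 0 := hA.ne_zero
  have hdetK : ∀ N : ℝ × ℝ, (u0 * N.2 + w0) * (-u1 * N.1 + w3) - (-u0 * N.1 + w1) * (u1 * N.2 + w2)
      = (A 2 0 * N.1 + A 2 1 * N.2 + A 2 2) * A.det := by
    intro N
    simp only [hu0, hu1, hw0, hw1, hw2, hw3]
    rw [Matrix.det_fin_three]
    ring
  have hUy : ∀ N ∈ U, ∀ᶠ t in nhds N.2, (N.1, t) ∈ U := by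
    intro N hN
    have ht : Filter.Tendsto (fun t : ℝ => (N.1, t)) (nhds N.2) (nhds N) := by
      have := ((continuous_const (y := N.1)).prodMk continuous_id).tendsto N.2
      simpa using this
    exact ht (hU.mem_nhds hN)
  have hUx : ∀ N ∈ U, ∀ᶠ t in nhds N.1, (t, N.2) ∈ U := by
    intro N hN
    have ht : Filter.Tendsto (fun t : ℝ => (t, N.2)) (nhds N.1) (nhds N) := by
      have := (continuous_id.prodMk (continuous_const (y := N.2))).tendsto N.1
      simpa using this
    exact ht (hU.mem_nhds hN)
  have hcy : ∀ N ∈ U, HasDerivAt (fun t => ψ (N.1, t))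
      ((-u0 * N.1 + w1) / (A 2 0 * N.1 + A 2 1 * N.2 + A 2 2) ^ 2, (-u1 * N.1 + w3) / (A 2 0 * N.1 + A 2 1 * N.2 + A 2 2) ^ 2) N.2 := by
    intro N hN
    have hev : (fun t => ψ (N.1, t)) =ᶠ[nhds N.2]
        (fun t => ((A 0 0 * N.1 + A 0 1 * t + A 0 2) / (A 2 0 * N.1 + A 2 1 * t + A 2 2),
                   (A 1 0 * N.1 + A 1 1 * t + A 1 2) / (A 2 0 * N.1 + A 2 1 * t + A 2 2))) := by
      filter_upwards [hUy N hN] with t ht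
      simpa using hψ _ ht
    have hdd' : A 2 0 * N.1 + A 2 1 * N.2 + A 2 2 ≠ 0 := hden N hN
    have hd : HasDerivAt (fun t : ℝ => A 2 0 * N.1 + A 2 1 * t + A 2 2) (A 2 1) N.2 := by
      simpa using (((hasDerivAt_id N.2).const_mul (A 2 1)).const_add (A 2 0 * N.1)).add_const (A 2 2)
    have hn1 : HasDerivAt (fun t : ℝ => A 0 0 * N.1 + A 0 1 * t + A 0 2) (A 0 1) N.2 := by
      simpa using (((hasDerivAt_id N.2).const_mul (A 0 1)).const_add (A 0 0 * N.1)).add_const (A 0 2)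
    have hn2 : HasDerivAt (fun t : ℝ => A 1 0 * N.1 + A 1 1 * t + A 1 2) (A 1 1) N.2 := by
      simpa using (((hasDerivAt_id N.2).const_mul (A 1 1)).const_add (A 1 0 * N.1)).add_const (A 1 2)
    have hq1' : HasDerivAt (fun t : ℝ => (A 0 0 * N.1 + A 0 1 * t + A 0 2) /
        (A 2 0 * N.1 + A 2 1 * t + A 2 2)) ((-u0 * N.1 + w1) / (A 2 0 * N.1 + A 2 1 * N.2 + A 2 2) ^ 2) N.2 := by
      refine (hn1.div hd hdd').congr_deriv ?_
      congr 1
      simp only [hu0, hu1, hw0, hw1, hw2, hw3]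
      ring
    have hq2' : HasDerivAt (fun t : ℝ => (A 1 0 * N.1 + A 1 1 * t + A 1 2) /
        (A 2 0 * N.1 + A 2 1 * t + A 2 2)) ((-u1 * N.1 + w3) / (A 2 0 * N.1 + A 2 1 * N.2 + A 2 2) ^ 2) N.2 := by
      refine (hn2.div hd hdd').congr_deriv ?_
      congr 1
      simp only [hu0, hu1, hw0, hw1, hw2, hw3]
      ring
    exact (hq1'.prodMk hq2').congr_of_eventuallyEq hev
  have hcx : ∀ N ∈ U, HasDerivAt (fun t => ψ (t, N.2))
      ((u0 * N.2 + w0) / (A 2 0 * N.1 + A 2 1 * N.2 + A 2 2) ^ 2, (u1 * N.2 + w2) / (A 2 0 * N.1 + A 2 1 * N.2 + A 2 2) ^ 2) N.1 := by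
    intro N hN
    have hev : (fun t => ψ (t, N.2)) =ᶠ[nhds N.1]
        (fun t => ((A 0 0 * t + A 0 1 * N.2 + A 0 2) / (A 2 0 * t + A 2 1 * N.2 + A 2 2),
                   (A 1 0 * t + A 1 1 * N.2 + A 1 2) / (A 2 0 * t + A 2 1 * N.2 + A 2 2))) := by
      filter_upwards [hUx N hN] with t ht
      simpa using hψ _ ht
    have hdd' : A 2 0 * N.1 + A 2 1 * N.2 + A 2 2 ≠ 0 := hden N hN
    have hdd'' : A 2 0 * N.1 + A 2 1 * N.2 + A 2 2 ≠ 0 := hdd'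
    have hd : HasDerivAt (fun t : ℝ => A 2 0 * t + A 2 1 * N.2 + A 2 2) (A 2 0) N.1 := by
      simpa using (((hasDerivAt_id N.1).const_mul (A 2 0)).add_const (A 2 1 * N.2)).add_const (A 2 2)
    have hn1 : HasDerivAt (fun t : ℝ => A 0 0 * t + A 0 1 * N.2 + A 0 2) (A 0 0) N.1 := by
      simpa using (((hasDerivAt_id N.1).const_mul (A 0 0)).add_const (A 0 1 * N.2)).add_const (A 0 2)
    have hn2 : HasDerivAt (fun t : ℝ => A 1 0 * t + A 1 1 * N.2 + A 1 2) (A 1 0) N.1 := by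
      simpa using (((hasDerivAt_id N.1).const_mul (A 1 0)).add_const (A 1 1 * N.2)).add_const (A 1 2)
    have hq1' : HasDerivAt (fun t : ℝ => (A 0 0 * t + A 0 1 * N.2 + A 0 2) /
        (A 2 0 * t + A 2 1 * N.2 + A 2 2)) ((u0 * N.2 + w0) / (A 2 0 * N.1 + A 2 1 * N.2 + A 2 2) ^ 2) N.1 := by
      refine (hn1.div hd hdd').congr_deriv ?_
      congr 1
      simp only [hu0, hu1, hw0, hw1, hw2, hw3]
      ring
    have hq2' : HasDerivAt (fun t : ℝ => (A 1 0 * t + A 1 1 * N.2 + A 1 2) /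
        (A 2 0 * t + A 2 1 * N.2 + A 2 2)) ((u1 * N.2 + w2) / (A 2 0 * N.1 + A 2 1 * N.2 + A 2 2) ^ 2) N.1 := by
      refine (hn2.div hd hdd').congr_deriv ?_
      congr 1
      simp only [hu0, hu1, hw0, hw1, hw2, hw3]
      ring
    exact (hq1'.prodMk hq2').congr_of_eventuallyEq hev
  have hψd : ∀ N ∈ U, DifferentiableAt ℝ ψ N := by
    intro N hN
    have hevψ : ψ =ᶠ[nhds N] (fun N' : ℝ × ℝ =>
        ((A 0 0 * N'.1 + A 0 1 * N'.2 + A 0 2) / (A 2 0 * N'.1 + A 2 1 * N'.2 + A 2 2),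
         (A 1 0 * N'.1 + A 1 1 * N'.2 + A 1 2) / (A 2 0 * N'.1 + A 2 1 * N'.2 + A 2 2))) := by
      filter_upwards [hU.mem_nhds hN] with N' hN' using hψ _ hN'
    have hdend : DifferentiableAt ℝ (fun N' : ℝ × ℝ => A 2 0 * N'.1 + A 2 1 * N'.2 + A 2 2) N := by
      fun_prop
    have hn1d : DifferentiableAt ℝ (fun N' : ℝ × ℝ => A 0 0 * N'.1 + A 0 1 * N'.2 + A 0 2) N := by
      fun_prop
    have hn2d : DifferentiableAt ℝ (fun N' : ℝ × ℝ => A 1 0 * N'.1 + A 1 1 * N'.2 + A 1 2) N := by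
      fun_prop
    have hq1d : DifferentiableAt ℝ (fun N' : ℝ × ℝ =>
        (A 0 0 * N'.1 + A 0 1 * N'.2 + A 0 2) / (A 2 0 * N'.1 + A 2 1 * N'.2 + A 2 2)) N :=
      by simp only [div_eq_mul_inv]; exact hn1d.mul (hdend.inv (hden N hN))
    have hq2d : DifferentiableAt ℝ (fun N' : ℝ × ℝ =>
        (A 1 0 * N'.1 + A 1 1 * N'.2 + A 1 2) / (A 2 0 * N'.1 + A 2 1 * N'.2 + A 2 2)) N :=
      by simp only [div_eq_mul_inv]; exact hn2d.mul (hdend.inv (hden N hN))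
    have hρ := hq1d.prodMk hq2d
    exact (hρ.hasFDerivAt.congr_of_eventuallyEq hevψ).differentiableAt
  have hfddir : ∀ N ∈ U, fderiv ℝ ψ N (1, F N)
      = (((u0 * N.2 + w0) + (-u0 * N.1 + w1) * F N) / (A 2 0 * N.1 + A 2 1 * N.2 + A 2 2) ^ 2, ((u1 * N.2 + w2) + (-u1 * N.1 + w3) * F N) / (A 2 0 * N.1 + A 2 1 * N.2 + A 2 2) ^ 2) := by
    intro N hN
    have h10 : fderiv ℝ ψ N (1, 0) = ((u0 * N.2 + w0) / (A 2 0 * N.1 + A 2 1 * N.2 + A 2 2) ^ 2, (u1 * N.2 + w2) / (A 2 0 * N.1 + A 2 1 * N.2 + A 2 2) ^ 2) := by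
      have h1 := hasDerivAt_comp_curve (F := ψ) (φ := fun t : ℝ => (t, N.2))
        (by simpa using hψd N hN) (curve_x N.1 N.2)
      exact (by simpa using h1 : HasDerivAt (fun t => ψ (t, N.2)) (fderiv ℝ ψ N (1, 0)) N.1).unique
        (hcx N hN)
    have h01 : fderiv ℝ ψ N (0, 1) = ((-u0 * N.1 + w1) / (A 2 0 * N.1 + A 2 1 * N.2 + A 2 2) ^ 2, (-u1 * N.1 + w3) / (A 2 0 * N.1 + A 2 1 * N.2 + A 2 2) ^ 2) := by
      have h1 := hasDerivAt_comp_curve (F := ψ) (φ := fun t : ℝ => (N.1, t))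
        (by simpa using hψd N hN) (curve_y N.1 N.2)
      exact (by simpa using h1 : HasDerivAt (fun t => ψ (N.1, t)) (fderiv ℝ ψ N (0, 1)) N.2).unique
        (hcy N hN)
    have hv : ((1:ℝ), F N) = ((1:ℝ), (0:ℝ)) + F N • ((0:ℝ), (1:ℝ)) := by simp
    rw [hv, map_add, map_smul, h10, h01]
    simp only [Prod.smul_mk, smul_eq_mul, Prod.mk_add_mk, Prod.mk.injEq]
    constructor <;> field_simp
  have hstageA : ∀ N ∈ U, (((u0 * N.2 + w0) + (-u0 * N.1 + w1) * F N) ≠ 0) ∧ F' (ψ N) = ((u1 * N.2 + w2) + (-u1 * N.1 + w3) * F N) / ((u0 * N.2 + w0) + (-u0 * N.1 + w1) * F N) := by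
    intro N hN
    have hmap := hmapF N hN
    rw [hfddir N hN] at hmap
    have hmap' : ((u1 * N.2 + w2) + (-u1 * N.1 + w3) * F N) / (A 2 0 * N.1 + A 2 1 * N.2 + A 2 2) ^ 2 = F' (ψ N) * (((u0 * N.2 + w0) + (-u0 * N.1 + w1) * F N) / (A 2 0 * N.1 + A 2 1 * N.2 + A 2 2) ^ 2) := hmap
    have hdd' : A 2 0 * N.1 + A 2 1 * N.2 + A 2 2 ≠ 0 := hden N hN
    have hDD2 : (A 2 0 * N.1 + A 2 1 * N.2 + A 2 2) ^ 2 ≠ 0 := pow_ne_zero 2 hdd'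
    have hs : ((u0 * N.2 + w0) + (-u0 * N.1 + w1) * F N) ≠ 0 := by
      intro h0
      rw [h0] at hmap'
      have hm2 : ((u1 * N.2 + w2) + (-u1 * N.1 + w3) * F N) = 0 := by
        have hz : ((u1 * N.2 + w2) + (-u1 * N.1 + w3) * F N) / (A 2 0 * N.1 + A 2 1 * N.2 + A 2 2) ^ 2 = 0 := by simpa using hmap'
        exact (div_eq_zero_iff.mp hz).resolve_right hDD2
      have hzero : (A 2 0 * N.1 + A 2 1 * N.2 + A 2 2) * A.det = 0 := by
        rw [← hdetK N]
        linear_combination (-u1 * N.1 + w3) * h0 - (-u0 * N.1 + w1) * hm2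
      exact (mul_ne_zero hdd' hdet0) hzero
    refine ⟨hs, ?_⟩
    rw [eq_div_iff hs]
    have hdd3 : N.1 * A 2 0 + N.2 * A 2 1 + A 2 2 ≠ 0 := by convert hdd' using 1; ring
    field_simp at hmap'
    linear_combination -hmap'
  have hsliceFy : ∀ N ∈ U, HasDerivAt (fun t => F (N.1, t)) (pdy F N) N.2 := by
    intro N hN
    have := hasDerivAt_comp_pd (F := F) (φ := fun t : ℝ => (N.1, t))
      (by simpa using (hF N hN).differentiableAt) (curve_y N.1 N.2)
    simpa using this
  have hsliceFx : ∀ N ∈ U, HasDerivAt (fun t => F (t, N.2)) (-(F N * pdy F N)) N.1 := by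
    intro N hN
    have h1 := hasDerivAt_comp_pd (F := F) (φ := fun t : ℝ => (t, N.2))
      (by simpa using (hF N hN).differentiableAt) (curve_x N.1 N.2)
    have h2 : pdx F N = -(F N * pdy F N) := by linarith [hlinF N hN]
    simpa [h2] using h1
  have hstageB : ∀ N ∈ U, pdy F' (ψ N) = (A 2 0 * N.1 + A 2 1 * N.2 + A 2 2) * ((A 2 0 * N.1 + A 2 1 * N.2 + A 2 2) * A.det * pdy F N + u1 * ((u0 * N.2 + w0) + (-u0 * N.1 + w1) * F N) - u0 * ((u1 * N.2 + w2) + (-u1 * N.1 + w3) * F N)) / (((u0 * N.2 + w0) + (-u0 * N.1 + w1) * F N) * A.det) := by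
    intro N hN
    have hdd' : A 2 0 * N.1 + A 2 1 * N.2 + A 2 2 ≠ 0 := hden N hN
    have hs : ((u0 * N.2 + w0) + (-u0 * N.1 + w1) * F N) ≠ 0 := (hstageA N hN).1
    have hF'd : DifferentiableAt ℝ F' (ψ N) := (hF' (ψ N) ⟨N, hN, rfl⟩).differentiableAt
    have hE1 : HasDerivAt (fun t => F' (ψ (N.1, t)))
        ((-u0 * N.1 + w1) / (A 2 0 * N.1 + A 2 1 * N.2 + A 2 2) ^ 2 * pdx F' (ψ N) + (-u1 * N.1 + w3) / (A 2 0 * N.1 + A 2 1 * N.2 + A 2 2) ^ 2 * pdy F' (ψ N)) N.2 := by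
      have := hasDerivAt_comp_pd (F := F') (φ := fun t => ψ (N.1, t))
        (by simpa using hF'd) (hcy N hN)
      simpa using this
    have hE2 : HasDerivAt (fun t => F' (ψ (t, N.2)))
        ((u0 * N.2 + w0) / (A 2 0 * N.1 + A 2 1 * N.2 + A 2 2) ^ 2 * pdx F' (ψ N) + (u1 * N.2 + w2) / (A 2 0 * N.1 + A 2 1 * N.2 + A 2 2) ^ 2 * pdy F' (ψ N)) N.1 := by
      have := hasDerivAt_comp_pd (F := F') (φ := fun t => ψ (t, N.2))
        (by simpa using hF'd) (hcx N hN)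
      simpa using this
    have hny : HasDerivAt (fun t => (u1 * t + w2) + (-u1 * N.1 + w3) * F (N.1, t))
        (u1 + (-u1 * N.1 + w3) * pdy F N) N.2 := by
      have h1 : HasDerivAt (fun t : ℝ => u1 * t + w2) u1 N.2 := by
        simpa using ((hasDerivAt_id N.2).const_mul u1).add_const w2
      exact h1.add ((hsliceFy N hN).const_mul (-u1 * N.1 + w3))
    have hdy : HasDerivAt (fun t => (u0 * t + w0) + (-u0 * N.1 + w1) * F (N.1, t))
        (u0 + (-u0 * N.1 + w1) * pdy F N) N.2 := by
      have h1 : HasDerivAt (fun t : ℝ => u0 * t + w0) u0 N.2 := by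
        simpa using ((hasDerivAt_id N.2).const_mul u0).add_const w0
      exact h1.add ((hsliceFy N hN).const_mul (-u0 * N.1 + w1))
    have hnx : HasDerivAt (fun t => (u1 * N.2 + w2) + (-u1 * t + w3) * F (t, N.2))
        (0 + (-u1 * F N + (-u1 * N.1 + w3) * -(F N * pdy F N))) N.1 := by
      have h1 : HasDerivAt (fun t : ℝ => -u1 * t + w3) (-u1) N.1 := by
        simpa using ((hasDerivAt_id N.1).const_mul (-u1)).add_const w3
      exact (hasDerivAt_const N.1 (u1 * N.2 + w2)).add (h1.mul (hsliceFx N hN))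
    have hdx : HasDerivAt (fun t => (u0 * N.2 + w0) + (-u0 * t + w1) * F (t, N.2))
        (0 + (-u0 * F N + (-u0 * N.1 + w1) * -(F N * pdy F N))) N.1 := by
      have h1 : HasDerivAt (fun t : ℝ => -u0 * t + w1) (-u0) N.1 := by
        simpa using ((hasDerivAt_id N.1).const_mul (-u0)).add_const w1
      exact (hasDerivAt_const N.1 (u0 * N.2 + w0)).add (h1.mul (hsliceFx N hN))
    have hevyP : (fun t => F' (ψ (N.1, t)) * ((u0 * t + w0) + (-u0 * N.1 + w1) * F (N.1, t)))
        =ᶠ[nhds N.2] (fun t => (u1 * t + w2) + (-u1 * N.1 + w3) * F (N.1, t)) := by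
      filter_upwards [hUy N hN] with t ht
      have h1 : (u0 * t + w0) + (-u0 * N.1 + w1) * F (N.1, t) ≠ 0 := by simpa using (hstageA _ ht).1
      have h2 : F' (ψ (N.1, t)) = ((u1 * t + w2) + (-u1 * N.1 + w3) * F (N.1, t)) /
          ((u0 * t + w0) + (-u0 * N.1 + w1) * F (N.1, t)) := by simpa using (hstageA _ ht).2
      rw [h2, div_mul_cancel₀ _ h1]
    have hevxP : (fun t => F' (ψ (t, N.2)) * ((u0 * N.2 + w0) + (-u0 * t + w1) * F (t, N.2)))
        =ᶠ[nhds N.1] (fun t => (u1 * N.2 + w2) + (-u1 * t + w3) * F (t, N.2)) := by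
      filter_upwards [hUx N hN] with t ht
      have h1 : (u0 * N.2 + w0) + (-u0 * t + w1) * F (t, N.2) ≠ 0 := by
        simpa using (hstageA _ ht).1
      have h2 : F' (ψ (t, N.2)) = ((u1 * N.2 + w2) + (-u1 * t + w3) * F (t, N.2)) /
          ((u0 * N.2 + w0) + (-u0 * t + w1) * F (t, N.2)) := by simpa using (hstageA _ ht).2
      rw [h2, div_mul_cancel₀ _ h1]
    have e1p : ((-u0 * N.1 + w1) / (A 2 0 * N.1 + A 2 1 * N.2 + A 2 2) ^ 2 * pdx F' (ψ N) + (-u1 * N.1 + w3) / (A 2 0 * N.1 + A 2 1 * N.2 + A 2 2) ^ 2 * pdy F' (ψ N)) * ((u0 * N.2 + w0) + (-u0 * N.1 + w1) * F N)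
        + F' (ψ N) * (u0 + (-u0 * N.1 + w1) * pdy F N) = u1 + (-u1 * N.1 + w3) * pdy F N :=
      (hE1.mul hdy).unique (hny.congr_of_eventuallyEq hevyP)
    have e2p : ((u0 * N.2 + w0) / (A 2 0 * N.1 + A 2 1 * N.2 + A 2 2) ^ 2 * pdx F' (ψ N) + (u1 * N.2 + w2) / (A 2 0 * N.1 + A 2 1 * N.2 + A 2 2) ^ 2 * pdy F' (ψ N)) * ((u0 * N.2 + w0) + (-u0 * N.1 + w1) * F N)
        + F' (ψ N) * (0 + (-u0 * F N + (-u0 * N.1 + w1) * -(F N * pdy F N)))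
        = 0 + (-u1 * F N + (-u1 * N.1 + w3) * -(F N * pdy F N)) :=
      (hE2.mul hdx).unique (hnx.congr_of_eventuallyEq hevxP)
    have hA' : F' (ψ N) * ((u0 * N.2 + w0) + (-u0 * N.1 + w1) * F N) = ((u1 * N.2 + w2) + (-u1 * N.1 + w3) * F N) := by
      rw [(hstageA N hN).2, div_mul_cancel₀ _ hs]
    have e1c : ((-u0 * N.1 + w1) * pdx F' (ψ N) + (-u1 * N.1 + w3) * pdy F' (ψ N)) * ((u0 * N.2 + w0) + (-u0 * N.1 + w1) * F N)
        + (A 2 0 * N.1 + A 2 1 * N.2 + A 2 2) ^ 2 * (F' (ψ N) * (u0 + (-u0 * N.1 + w1) * pdy F N))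
        = (A 2 0 * N.1 + A 2 1 * N.2 + A 2 2) ^ 2 * (u1 + (-u1 * N.1 + w3) * pdy F N) := by
      have hD2 : (A 2 0 * N.1 + A 2 1 * N.2 + A 2 2) ^ 2 ≠ 0 := pow_ne_zero 2 hdd'
      have hx : (A 2 0 * N.1 + A 2 1 * N.2 + A 2 2) ^ 2 * ((-u0 * N.1 + w1) / (A 2 0 * N.1 + A 2 1 * N.2 + A 2 2) ^ 2) = (-u0 * N.1 + w1) := by rw [mul_comm]; exact div_mul_cancel₀ _ hD2
      have hz : (A 2 0 * N.1 + A 2 1 * N.2 + A 2 2) ^ 2 * ((-u1 * N.1 + w3) / (A 2 0 * N.1 + A 2 1 * N.2 + A 2 2) ^ 2) = (-u1 * N.1 + w3) := by rw [mul_comm]; exact div_mul_cancel₀ _ hD2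
      linear_combination (A 2 0 * N.1 + A 2 1 * N.2 + A 2 2) ^ 2 * e1p - (pdx F' (ψ N) * ((u0 * N.2 + w0) + (-u0 * N.1 + w1) * F N)) * hx - (pdy F' (ψ N) * ((u0 * N.2 + w0) + (-u0 * N.1 + w1) * F N)) * hz
    have e2c : ((u0 * N.2 + w0) * pdx F' (ψ N) + (u1 * N.2 + w2) * pdy F' (ψ N)) * ((u0 * N.2 + w0) + (-u0 * N.1 + w1) * F N)
        + (A 2 0 * N.1 + A 2 1 * N.2 + A 2 2) ^ 2 * (F' (ψ N) * (0 + (-u0 * F N + (-u0 * N.1 + w1) * -(F N * pdy F N))))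
        = (A 2 0 * N.1 + A 2 1 * N.2 + A 2 2) ^ 2 * (0 + (-u1 * F N + (-u1 * N.1 + w3) * -(F N * pdy F N))) := by
      have hD2 : (A 2 0 * N.1 + A 2 1 * N.2 + A 2 2) ^ 2 ≠ 0 := pow_ne_zero 2 hdd'
      have hx : (A 2 0 * N.1 + A 2 1 * N.2 + A 2 2) ^ 2 * ((u0 * N.2 + w0) / (A 2 0 * N.1 + A 2 1 * N.2 + A 2 2) ^ 2) = (u0 * N.2 + w0) := by rw [mul_comm]; exact div_mul_cancel₀ _ hD2
      have hz : (A 2 0 * N.1 + A 2 1 * N.2 + A 2 2) ^ 2 * ((u1 * N.2 + w2) / (A 2 0 * N.1 + A 2 1 * N.2 + A 2 2) ^ 2) = (u1 * N.2 + w2) := by rw [mul_comm]; exact div_mul_cancel₀ _ hD2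
      linear_combination (A 2 0 * N.1 + A 2 1 * N.2 + A 2 2) ^ 2 * e2p - (pdx F' (ψ N) * ((u0 * N.2 + w0) + (-u0 * N.1 + w1) * F N)) * hx - (pdy F' (ψ N) * ((u0 * N.2 + w0) + (-u0 * N.1 + w1) * F N)) * hz
    rw [eq_div_iff (mul_ne_zero hs hdet0)]
    apply mul_left_cancel₀ hdd'
    linear_combination (u0 * N.2 + w0) * e1c - (-u0 * N.1 + w1) * e2c
      - (pdy F' (ψ N) * ((u0 * N.2 + w0) + (-u0 * N.1 + w1) * F N)) * hdetK N
      - ((A 2 0 * N.1 + A 2 1 * N.2 + A 2 2) ^ 2 * (u0 + (-u0 * N.1 + w1) * pdy F N)) * hA'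
      + ((A 2 0 * N.1 + A 2 1 * N.2 + A 2 2) ^ 2 * pdy F N) * hdetK N
  intro M hM
  refine ⟨(hstageA M hM).1, (hstageA M hM).2, hstageB M hM, ?_⟩
  have hdd' : A 2 0 * M.1 + A 2 1 * M.2 + A 2 2 ≠ 0 := hden M hM
  have hs : ((u0 * M.2 + w0) + (-u0 * M.1 + w1) * F M) ≠ 0 := (hstageA M hM).1
  have hFan : AnalyticAt ℝ F M := hF M hM
  have hgd : DifferentiableAt ℝ (pdy F') (ψ M) := pdy_differentiableAt (hF' (ψ M) ⟨M, hM, rfl⟩)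
  have hsliceFyy : HasDerivAt (fun t => pdy F (M.1, t)) (pdy (pdy F) M) M.2 := by
    have := hasDerivAt_comp_pd (F := pdy F) (φ := fun t : ℝ => (M.1, t))
      (by simpa using pdy_differentiableAt hFan) (curve_y M.1 M.2)
    simpa using this
  have hpdxpdy : pdx (pdy F) M = -(pdy F M * pdy F M + F M * pdy (pdy F) M) := by
    rw [pdx_pdy_symm hFan]
    have hev : pdx F =ᶠ[nhds M] (fun N => -(F N * pdy F N)) := by
      filter_upwards [hU.mem_nhds hM] with N hN
      linarith [hlinF N hN]
    rw [pdy_congr hev]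
    exact (((hsliceFy M hM).mul hsliceFyy).neg).deriv
  have hsliceFyx : HasDerivAt (fun t => pdy F (t, M.2))
      (-(pdy F M * pdy F M + F M * pdy (pdy F) M)) M.1 := by
    have h2 : HasDerivAt (fun t => pdy F (t, M.2)) (pdx (pdy F) M) M.1 := by
      have := hasDerivAt_comp_pd (F := pdy F) (φ := fun t : ℝ => (t, M.2))
        (by simpa using pdy_differentiableAt hFan) (curve_x M.1 M.2)
      simpa using this
    rwa [hpdxpdy] at h2
  have hgE1 : HasDerivAt (fun t => pdy F' (ψ (M.1, t)))
      ((-u0 * M.1 + w1) / (A 2 0 * M.1 + A 2 1 * M.2 + A 2 2) ^ 2 * pdx (pdy F') (ψ M) + (-u1 * M.1 + w3) / (A 2 0 * M.1 + A 2 1 * M.2 + A 2 2) ^ 2 * pdy (pdy F') (ψ M)) M.2 := by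
    have := hasDerivAt_comp_pd (F := pdy F') (φ := fun t => ψ (M.1, t))
      (by simpa using hgd) (hcy M hM)
    simpa using this
  have hgE2 : HasDerivAt (fun t => pdy F' (ψ (t, M.2)))
      ((u0 * M.2 + w0) / (A 2 0 * M.1 + A 2 1 * M.2 + A 2 2) ^ 2 * pdx (pdy F') (ψ M) + (u1 * M.2 + w2) / (A 2 0 * M.1 + A 2 1 * M.2 + A 2 2) ^ 2 * pdy (pdy F') (ψ M)) M.1 := by
    have := hasDerivAt_comp_pd (F := pdy F') (φ := fun t => ψ (t, M.2))
      (by simpa using hgd) (hcx M hM)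
    simpa using this
  have hDDy : HasDerivAt (fun t : ℝ => A 2 0 * M.1 + A 2 1 * t + A 2 2) (A 2 1) M.2 := by
    simpa using (((hasDerivAt_id M.2).const_mul (A 2 1)).const_add (A 2 0 * M.1)).add_const (A 2 2)
  have hDDx : HasDerivAt (fun t : ℝ => A 2 0 * t + A 2 1 * M.2 + A 2 2) (A 2 0) M.1 := by
    simpa using (((hasDerivAt_id M.1).const_mul (A 2 0)).add_const (A 2 1 * M.2)).add_const (A 2 2)
  have hSy : HasDerivAt (fun t => (u0 * t + w0) + (-u0 * M.1 + w1) * F (M.1, t))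
      (u0 + (-u0 * M.1 + w1) * pdy F M) M.2 := by
    have h1 : HasDerivAt (fun t : ℝ => u0 * t + w0) u0 M.2 := by
      simpa using ((hasDerivAt_id M.2).const_mul u0).add_const w0
    exact h1.add ((hsliceFy M hM).const_mul (-u0 * M.1 + w1))
  have hM2y : HasDerivAt (fun t => (u1 * t + w2) + (-u1 * M.1 + w3) * F (M.1, t))
      (u1 + (-u1 * M.1 + w3) * pdy F M) M.2 := by
    have h1 : HasDerivAt (fun t : ℝ => u1 * t + w2) u1 M.2 := by
      simpa using ((hasDerivAt_id M.2).const_mul u1).add_const w2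
    exact h1.add ((hsliceFy M hM).const_mul (-u1 * M.1 + w3))
  have hSx : HasDerivAt (fun t => (u0 * M.2 + w0) + (-u0 * t + w1) * F (t, M.2))
      (0 + (-u0 * F M + (-u0 * M.1 + w1) * -(F M * pdy F M))) M.1 := by
    have h1 : HasDerivAt (fun t : ℝ => -u0 * t + w1) (-u0) M.1 := by
      simpa using ((hasDerivAt_id M.1).const_mul (-u0)).add_const w1
    exact (hasDerivAt_const M.1 (u0 * M.2 + w0)).add (h1.mul (hsliceFx M hM))
  have hM2x : HasDerivAt (fun t => (u1 * M.2 + w2) + (-u1 * t + w3) * F (t, M.2))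
      (0 + (-u1 * F M + (-u1 * M.1 + w3) * -(F M * pdy F M))) M.1 := by
    have h1 : HasDerivAt (fun t : ℝ => -u1 * t + w3) (-u1) M.1 := by
      simpa using ((hasDerivAt_id M.1).const_mul (-u1)).add_const w3
    exact (hasDerivAt_const M.1 (u1 * M.2 + w2)).add (h1.mul (hsliceFx M hM))
  have hinnerY : HasDerivAt (fun t => (A 2 0 * M.1 + A 2 1 * t + A 2 2) * A.det * pdy F (M.1, t)
      + u1 * ((u0 * t + w0) + (-u0 * M.1 + w1) * F (M.1, t)) - u0 * ((u1 * t + w2) + (-u1 * M.1 + w3) * F (M.1, t)))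
      (A 2 1 * A.det * pdy F M + (A 2 0 * M.1 + A 2 1 * M.2 + A 2 2) * A.det * pdy (pdy F) M + u1 * (u0 + (-u0 * M.1 + w1) * pdy F M) - u0 * (u1 + (-u1 * M.1 + w3) * pdy F M)) M.2 :=
    (((hDDy.mul_const (A.det)).mul hsliceFyy).add (hSy.const_mul u1)).sub (hM2y.const_mul u0)
  have hinnerX : HasDerivAt (fun t => (A 2 0 * t + A 2 1 * M.2 + A 2 2) * A.det * pdy F (t, M.2)
      + u1 * ((u0 * M.2 + w0) + (-u0 * t + w1) * F (t, M.2))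
      - u0 * ((u1 * M.2 + w2) + (-u1 * t + w3) * F (t, M.2)))
      (A 2 0 * A.det * pdy F M + (A 2 0 * M.1 + A 2 1 * M.2 + A 2 2) * A.det * -(pdy F M * pdy F M + F M * pdy (pdy F) M) + u1 * (0 + (-u0 * F M + (-u0 * M.1 + w1) * -(F M * pdy F M))) - u0 * (0 + (-u1 * F M + (-u1 * M.1 + w3) * -(F M * pdy F M)))) M.1 :=
    (((hDDx.mul_const (A.det)).mul hsliceFyx).add (hSx.const_mul u1)).sub (hM2x.const_mul u0)
  have hnumCy : HasDerivAt (fun t => (A 2 0 * M.1 + A 2 1 * t + A 2 2) *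
      ((A 2 0 * M.1 + A 2 1 * t + A 2 2) * A.det * pdy F (M.1, t)
      + u1 * ((u0 * t + w0) + (-u0 * M.1 + w1) * F (M.1, t)) - u0 * ((u1 * t + w2) + (-u1 * M.1 + w3) * F (M.1, t))))
      (A 2 1 * ((A 2 0 * M.1 + A 2 1 * M.2 + A 2 2) * A.det * pdy F M + u1 * ((u0 * M.2 + w0) + (-u0 * M.1 + w1) * F M) - u0 * ((u1 * M.2 + w2) + (-u1 * M.1 + w3) * F M)) + (A 2 0 * M.1 + A 2 1 * M.2 + A 2 2) * (A 2 1 * A.det * pdy F M + (A 2 0 * M.1 + A 2 1 * M.2 + A 2 2) * A.det * pdy (pdy F) M + u1 * (u0 + (-u0 * M.1 + w1) * pdy F M) - u0 * (u1 + (-u1 * M.1 + w3) * pdy F M))) M.2 := hDDy.mul hinnerY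
  have hnumCx : HasDerivAt (fun t => (A 2 0 * t + A 2 1 * M.2 + A 2 2) *
      ((A 2 0 * t + A 2 1 * M.2 + A 2 2) * A.det * pdy F (t, M.2)
      + u1 * ((u0 * M.2 + w0) + (-u0 * t + w1) * F (t, M.2))
      - u0 * ((u1 * M.2 + w2) + (-u1 * t + w3) * F (t, M.2))))
      (A 2 0 * ((A 2 0 * M.1 + A 2 1 * M.2 + A 2 2) * A.det * pdy F M + u1 * ((u0 * M.2 + w0) + (-u0 * M.1 + w1) * F M) - u0 * ((u1 * M.2 + w2) + (-u1 * M.1 + w3) * F M)) + (A 2 0 * M.1 + A 2 1 * M.2 + A 2 2) * (A 2 0 * A.det * pdy F M + (A 2 0 * M.1 + A 2 1 * M.2 + A 2 2) * A.det * -(pdy F M * pdy F M + F M * pdy (pdy F) M) + u1 * (0 + (-u0 * F M + (-u0 * M.1 + w1) * -(F M * pdy F M))) - u0 * (0 + (-u1 * F M + (-u1 * M.1 + w3) * -(F M * pdy F M))))) M.1 := hDDx.mul hinnerX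
  have hdenCy : HasDerivAt (fun t => ((u0 * t + w0) + (-u0 * M.1 + w1) * F (M.1, t)) * A.det)
      ((u0 + (-u0 * M.1 + w1) * pdy F M) * A.det) M.2 := hSy.mul_const (A.det)
  have hdenCx : HasDerivAt (fun t => ((u0 * M.2 + w0) + (-u0 * t + w1) * F (t, M.2)) * A.det)
      ((0 + (-u0 * F M + (-u0 * M.1 + w1) * -(F M * pdy F M))) * A.det) M.1 := hSx.mul_const (A.det)
  have hevCy : (fun t => pdy F' (ψ (M.1, t)) * (((u0 * t + w0) + (-u0 * M.1 + w1) * F (M.1, t)) * A.det))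
      =ᶠ[nhds M.2] (fun t => (A 2 0 * M.1 + A 2 1 * t + A 2 2) *
      ((A 2 0 * M.1 + A 2 1 * t + A 2 2) * A.det * pdy F (M.1, t)
      + u1 * ((u0 * t + w0) + (-u0 * M.1 + w1) * F (M.1, t)) - u0 * ((u1 * t + w2) + (-u1 * M.1 + w3) * F (M.1, t)))) := by
    filter_upwards [hUy M hM] with t ht
    have h1 : (u0 * t + w0) + (-u0 * M.1 + w1) * F (M.1, t) ≠ 0 := by simpa using (hstageA _ ht).1
    have h2 : pdy F' (ψ (M.1, t)) = (A 2 0 * M.1 + A 2 1 * t + A 2 2) *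
        ((A 2 0 * M.1 + A 2 1 * t + A 2 2) * A.det * pdy F (M.1, t)
        + u1 * ((u0 * t + w0) + (-u0 * M.1 + w1) * F (M.1, t)) - u0 * ((u1 * t + w2) + (-u1 * M.1 + w3) * F (M.1, t))) /
        (((u0 * t + w0) + (-u0 * M.1 + w1) * F (M.1, t)) * A.det) := by simpa using hstageB _ ht
    rw [h2, div_mul_cancel₀ _ (mul_ne_zero h1 hdet0)]
  have hevCx : (fun t => pdy F' (ψ (t, M.2)) * (((u0 * M.2 + w0) + (-u0 * t + w1) * F (t, M.2)) * A.det))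
      =ᶠ[nhds M.1] (fun t => (A 2 0 * t + A 2 1 * M.2 + A 2 2) *
      ((A 2 0 * t + A 2 1 * M.2 + A 2 2) * A.det * pdy F (t, M.2)
      + u1 * ((u0 * M.2 + w0) + (-u0 * t + w1) * F (t, M.2))
      - u0 * ((u1 * M.2 + w2) + (-u1 * t + w3) * F (t, M.2)))) := by
    filter_upwards [hUx M hM] with t ht
    have h1 : (u0 * M.2 + w0) + (-u0 * t + w1) * F (t, M.2) ≠ 0 := by
      simpa using (hstageA _ ht).1
    have h2 : pdy F' (ψ (t, M.2)) = (A 2 0 * t + A 2 1 * M.2 + A 2 2) *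
        ((A 2 0 * t + A 2 1 * M.2 + A 2 2) * A.det * pdy F (t, M.2)
        + u1 * ((u0 * M.2 + w0) + (-u0 * t + w1) * F (t, M.2))
        - u0 * ((u1 * M.2 + w2) + (-u1 * t + w3) * F (t, M.2))) /
        (((u0 * M.2 + w0) + (-u0 * t + w1) * F (t, M.2)) * A.det) := by simpa using hstageB _ ht
    rw [h2, div_mul_cancel₀ _ (mul_ne_zero h1 hdet0)]
  have ec1p : ((-u0 * M.1 + w1) / (A 2 0 * M.1 + A 2 1 * M.2 + A 2 2) ^ 2 * pdx (pdy F') (ψ M) + (-u1 * M.1 + w3) / (A 2 0 * M.1 + A 2 1 * M.2 + A 2 2) ^ 2 * pdy (pdy F') (ψ M))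
      * (((u0 * M.2 + w0) + (-u0 * M.1 + w1) * F M) * A.det) + pdy F' (ψ M) * ((u0 + (-u0 * M.1 + w1) * pdy F M) * A.det)
      = A 2 1 * ((A 2 0 * M.1 + A 2 1 * M.2 + A 2 2) * A.det * pdy F M + u1 * ((u0 * M.2 + w0) + (-u0 * M.1 + w1) * F M) - u0 * ((u1 * M.2 + w2) + (-u1 * M.1 + w3) * F M)) + (A 2 0 * M.1 + A 2 1 * M.2 + A 2 2) * (A 2 1 * A.det * pdy F M + (A 2 0 * M.1 + A 2 1 * M.2 + A 2 2) * A.det * pdy (pdy F) M + u1 * (u0 + (-u0 * M.1 + w1) * pdy F M) - u0 * (u1 + (-u1 * M.1 + w3) * pdy F M)) :=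
    (hgE1.mul hdenCy).unique (hnumCy.congr_of_eventuallyEq hevCy)
  have ec2p : ((u0 * M.2 + w0) / (A 2 0 * M.1 + A 2 1 * M.2 + A 2 2) ^ 2 * pdx (pdy F') (ψ M) + (u1 * M.2 + w2) / (A 2 0 * M.1 + A 2 1 * M.2 + A 2 2) ^ 2 * pdy (pdy F') (ψ M))
      * (((u0 * M.2 + w0) + (-u0 * M.1 + w1) * F M) * A.det) + pdy F' (ψ M) * ((0 + (-u0 * F M + (-u0 * M.1 + w1) * -(F M * pdy F M))) * A.det)
      = A 2 0 * ((A 2 0 * M.1 + A 2 1 * M.2 + A 2 2) * A.det * pdy F M + u1 * ((u0 * M.2 + w0) + (-u0 * M.1 + w1) * F M) - u0 * ((u1 * M.2 + w2) + (-u1 * M.1 + w3) * F M)) + (A 2 0 * M.1 + A 2 1 * M.2 + A 2 2) * (A 2 0 * A.det * pdy F M + (A 2 0 * M.1 + A 2 1 * M.2 + A 2 2) * A.det * -(pdy F M * pdy F M + F M * pdy (pdy F) M) + u1 * (0 + (-u0 * F M + (-u0 * M.1 + w1) * -(F M * pdy F M))) - u0 * (0 + (-u1 * F M + (-u1 * M.1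 + w3) * -(F M * pdy F M)))) :=
    (hgE2.mul hdenCx).unique (hnumCx.congr_of_eventuallyEq hevCx)
  have ec1c : ((-u0 * M.1 + w1) * pdx (pdy F') (ψ M) + (-u1 * M.1 + w3) * pdy (pdy F') (ψ M)) * (((u0 * M.2 + w0) + (-u0 * M.1 + w1) * F M) * A.det)
      + (A 2 0 * M.1 + A 2 1 * M.2 + A 2 2) ^ 2 * (pdy F' (ψ M) * ((u0 + (-u0 * M.1 + w1) * pdy F M) * A.det))
      = (A 2 0 * M.1 + A 2 1 * M.2 + A 2 2) ^ 2 * (A 2 1 * ((A 2 0 * M.1 + A 2 1 * M.2 + A 2 2) * A.det * pdy F M + u1 * ((u0 * M.2 + w0) + (-u0 * M.1 + w1) * F M) - u0 * ((u1 * M.2 + w2) + (-u1 * M.1 + w3) * F M)) + (A 2 0 * M.1 + A 2 1 * M.2 + A 2 2) * (A 2 1 * A.det * pdy F M + (A 2 0 * M.1 + A 2 1 * M.2 + A 2 2) * A.det * pdy (pdy F) M + u1 * (u0 + (-u0 * M.1 + w1) * pdy F M) - u0 * (u1 + (-u1 * M.1 + w3) * pdy F M))) := by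
    have hD2 : (A 2 0 * M.1 + A 2 1 * M.2 + A 2 2) ^ 2 ≠ 0 := pow_ne_zero 2 hdd'
    have hx : (A 2 0 * M.1 + A 2 1 * M.2 + A 2 2) ^ 2 * ((-u0 * M.1 + w1) / (A 2 0 * M.1 + A 2 1 * M.2 + A 2 2) ^ 2) = (-u0 * M.1 + w1) := by rw [mul_comm]; exact div_mul_cancel₀ _ hD2
    have hz : (A 2 0 * M.1 + A 2 1 * M.2 + A 2 2) ^ 2 * ((-u1 * M.1 + w3) / (A 2 0 * M.1 + A 2 1 * M.2 + A 2 2) ^ 2) = (-u1 * M.1 + w3) := by rw [mul_comm]; exact div_mul_cancel₀ _ hD2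
    linear_combination (A 2 0 * M.1 + A 2 1 * M.2 + A 2 2) ^ 2 * ec1p - (pdx (pdy F') (ψ M) * (((u0 * M.2 + w0) + (-u0 * M.1 + w1) * F M) * A.det)) * hx - (pdy (pdy F') (ψ M) * (((u0 * M.2 + w0) + (-u0 * M.1 + w1) * F M) * A.det)) * hz
  have ec2c : ((u0 * M.2 + w0) * pdx (pdy F') (ψ M) + (u1 * M.2 + w2) * pdy (pdy F') (ψ M)) * (((u0 * M.2 + w0) + (-u0 * M.1 + w1) * F M) * A.det)
      + (A 2 0 * M.1 + A 2 1 * M.2 + A 2 2) ^ 2 * (pdy F' (ψ M) * ((0 + (-u0 * F M + (-u0 * M.1 + w1) * -(F M * pdy F M))) * A.det))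
      = (A 2 0 * M.1 + A 2 1 * M.2 + A 2 2) ^ 2 * (A 2 0 * ((A 2 0 * M.1 + A 2 1 * M.2 + A 2 2) * A.det * pdy F M + u1 * ((u0 * M.2 + w0) + (-u0 * M.1 + w1) * F M) - u0 * ((u1 * M.2 + w2) + (-u1 * M.1 + w3) * F M)) + (A 2 0 * M.1 + A 2 1 * M.2 + A 2 2) * (A 2 0 * A.det * pdy F M + (A 2 0 * M.1 + A 2 1 * M.2 + A 2 2) * A.det * -(pdy F M * pdy F M + F M * pdy (pdy F) M) + u1 * (0 + (-u0 * F M + (-u0 * M.1 + w1) * -(F M * pdy F M))) - u0 * (0 + (-u1 * F M + (-u1 * M.1 + w3) * -(F M * pdy F M))))) := by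
    have hD2 : (A 2 0 * M.1 + A 2 1 * M.2 + A 2 2) ^ 2 ≠ 0 := pow_ne_zero 2 hdd'
    have hx : (A 2 0 * M.1 + A 2 1 * M.2 + A 2 2) ^ 2 * ((u0 * M.2 + w0) / (A 2 0 * M.1 + A 2 1 * M.2 + A 2 2) ^ 2) = (u0 * M.2 + w0) := by rw [mul_comm]; exact div_mul_cancel₀ _ hD2
    have hz : (A 2 0 * M.1 + A 2 1 * M.2 + A 2 2) ^ 2 * ((u1 * M.2 + w2) / (A 2 0 * M.1 + A 2 1 * M.2 + A 2 2) ^ 2) = (u1 * M.2 + w2) := by rw [mul_comm]; exact div_mul_cancel₀ _ hD2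
    linear_combination (A 2 0 * M.1 + A 2 1 * M.2 + A 2 2) ^ 2 * ec2p - (pdx (pdy F') (ψ M) * (((u0 * M.2 + w0) + (-u0 * M.1 + w1) * F M) * A.det)) * hx - (pdy (pdy F') (ψ M) * (((u0 * M.2 + w0) + (-u0 * M.1 + w1) * F M) * A.det)) * hz
  have hR5 : pdy F' (ψ M) * (((u0 * M.2 + w0) + (-u0 * M.1 + w1) * F M) * A.det) = (A 2 0 * M.1 + A 2 1 * M.2 + A 2 2) * ((A 2 0 * M.1 + A 2 1 * M.2 + A 2 2) * A.det * pdy F M + u1 * ((u0 * M.2 + w0) + (-u0 * M.1 + w1) * F M) - u0 * ((u1 * M.2 + w2) + (-u1 * M.1 + w3) * F M)) := by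
    rw [hstageB M hM, div_mul_cancel₀ _ (mul_ne_zero hs hdet0)]
  have hbig : (u0 * M.2 + w0) * (A 2 1 * ((A 2 0 * M.1 + A 2 1 * M.2 + A 2 2) * A.det * pdy F M + u1 * ((u0 * M.2 + w0) + (-u0 * M.1 + w1) * F M) - u0 * ((u1 * M.2 + w2) + (-u1 * M.1 + w3) * F M)) + (A 2 0 * M.1 + A 2 1 * M.2 + A 2 2) * (A 2 1 * A.det * pdy F M + (A 2 0 * M.1 + A 2 1 * M.2 + A 2 2) * A.det * pdy (pdy F) M + u1 * (u0 + (-u0 * M.1 + w1) * pdy F M) - u0 * (u1 + (-u1 * M.1 + w3) * pdy F M)))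
      - (-u0 * M.1 + w1) * (A 2 0 * ((A 2 0 * M.1 + A 2 1 * M.2 + A 2 2) * A.det * pdy F M + u1 * ((u0 * M.2 + w0) + (-u0 * M.1 + w1) * F M) - u0 * ((u1 * M.2 + w2) + (-u1 * M.1 + w3) * F M)) + (A 2 0 * M.1 + A 2 1 * M.2 + A 2 2) * (A 2 0 * A.det * pdy F M + (A 2 0 * M.1 + A 2 1 * M.2 + A 2 2) * A.det * -(pdy F M * pdy F M + F M * pdy (pdy F) M) + u1 * (0 + (-u0 * F M + (-u0 * M.1 + w1) * -(F M * pdy F M))) - u0 * (0 + (-u1 * F M + (-u1 * M.1 + w3) * -(F M * pdy F M)))))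
      = (A 2 0 * M.1 + A 2 1 * M.2 + A 2 2) * ((A 2 0 * M.1 + A 2 1 * M.2 + A 2 2) * A.det * pdy F M + u1 * ((u0 * M.2 + w0) + (-u0 * M.1 + w1) * F M) - u0 * ((u1 * M.2 + w2) + (-u1 * M.1 + w3) * F M)) * (u0 + (-u0 * M.1 + w1) * pdy F M)
        + (A 2 0 * M.1 + A 2 1 * M.2 + A 2 2) ^ 2 * pdy (pdy F) M * (((u0 * M.2 + w0) + (-u0 * M.1 + w1) * F M) * A.det) := by
    simp only [hu0, hu1, hw0, hw1, hw2, hw3, Matrix.det_fin_three]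
    ring
  rw [eq_div_iff hdet0]
  apply mul_left_cancel₀ (mul_ne_zero hdd' (mul_ne_zero hs hdet0))
  linear_combination (u0 * M.2 + w0) * ec1c - (-u0 * M.1 + w1) * ec2c
    - (pdy (pdy F') (ψ M) * (((u0 * M.2 + w0) + (-u0 * M.1 + w1) * F M) * A.det)) * hdetK M
    - ((A 2 0 * M.1 + A 2 1 * M.2 + A 2 2) ^ 2 * (u0 + (-u0 * M.1 + w1) * pdy F M)) * hR5
    + (A 2 0 * M.1 + A 2 1 * M.2 + A 2 2) ^ 2 * hbig


lemma web_assembly (K11 K12 K21 K22 d e u0 u1 p py pyy q qy qyy r ry ryy : ℝ)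
    (hdet : K11 * K22 - K12 * K21 = d * e) (hd : d ≠ 0) (he : e ≠ 0)
    (hsP : K11 + K12 * p ≠ 0) (hsQ : K11 + K12 * q ≠ 0) (hsR : K11 + K12 * r ≠ 0)
    (hD : (p - q) * ry + (q - r) * py + (r - p) * qy ≠ 0) :
    ((K21 + K22 * p) / (K11 + K12 * p) - (K21 + K22 * q) / (K11 + K12 * q)) *
        ((K21 + K22 * q) / (K11 + K12 * q) - (K21 + K22 * r) / (K11 + K12 * r)) *
        ((K21 + K22 * r) / (K11 + K12 * r) - (K21 + K22 * p) / (K11 + K12 * p)) *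
        (d ^ 3 * pyy / e + d ^ 3 * qyy / e + d ^ 3 * ryy / e) /
      (((K21 + K22 * p) / (K11 + K12 * p) - (K21 + K22 * q) / (K11 + K12 * q)) *
          (d * (d * e * ry + u1 * (K11 + K12 * r) - u0 * (K21 + K22 * r)) / ((K11 + K12 * r) * e)) +
        ((K21 + K22 * q) / (K11 + K12 * q) - (K21 + K22 * r) / (K11 + K12 * r)) *
          (d * (d * e * py + u1 * (K11 + K12 * p) - u0 * (K21 + K22 * p)) / ((K11 + K12 * p) * e)) +
        ((K21 + K22 * r) / (K11 + K12 * r) - (K21 + K22 * p) / (K11 + K12 * p)) *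
          (d * (d * e * qy + u1 * (K11 + K12 * q) - u0 * (K21 + K22 * q)) / ((K11 + K12 * q) * e))) ^ 2 =
    (p - q) * (q - r) * (r - p) * (pyy + qyy + ryy) /
      ((p - q) * ry + (q - r) * py + (r - p) * qy) ^ 2 := by
  have hPQ : (K21 + K22 * p) / (K11 + K12 * p) - (K21 + K22 * q) / (K11 + K12 * q)
      = d * e * (p - q) / ((K11 + K12 * p) * (K11 + K12 * q)) := by
    rw [div_sub_div _ _ hsP hsQ]
    congr 1
    linear_combination (p - q) * hdet
  have hQR : (K21 + K22 * q) / (K11 + K12 * q) - (K21 + K22 * r) / (K11 + K12 * r)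
      = d * e * (q - r) / ((K11 + K12 * q) * (K11 + K12 * r)) := by
    rw [div_sub_div _ _ hsQ hsR]
    congr 1
    linear_combination (q - r) * hdet
  have hRP : (K21 + K22 * r) / (K11 + K12 * r) - (K21 + K22 * p) / (K11 + K12 * p)
      = d * e * (r - p) / ((K11 + K12 * r) * (K11 + K12 * p)) := by
    rw [div_sub_div _ _ hsR hsP]
    congr 1
    linear_combination (r - p) * hdet
  rw [hPQ, hQR, hRP]
  have hDelta' :
      d * e * (p - q) / ((K11 + K12 * p) * (K11 + K12 * q)) *
          (d * (d * e * ry + u1 * (K11 + K12 * r) - u0 * (K21 + K22 * r)) / ((K11 + K12 * r) * e)) +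
        d * e * (q - r) / ((K11 + K12 * q) * (K11 + K12 * r)) *
          (d * (d * e * py + u1 * (K11 + K12 * p) - u0 * (K21 + K22 * p)) / ((K11 + K12 * p) * e)) +
        d * e * (r - p) / ((K11 + K12 * r) * (K11 + K12 * p)) *
          (d * (d * e * qy + u1 * (K11 + K12 * q) - u0 * (K21 + K22 * q)) / ((K11 + K12 * q) * e))
      = d ^ 3 * e * ((p - q) * ry + (q - r) * py + (r - p) * qy) /
          ((K11 + K12 * p) * (K11 + K12 * q) * (K11 + K12 * r)) := by
    field_simp
    ring
  rw [hDelta']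
  have hsP' : K11 + p * K12 ≠ 0 := by rwa [mul_comm]
  have hsQ' : K11 + q * K12 ≠ 0 := by rwa [mul_comm]
  have hsR' : K11 + r * K12 ≠ 0 := by rwa [mul_comm]
  field_simp

/-- If a homography `ψ` (given by an invertible 3×3 matrix `A`) maps a non-flat linear
3-web with slope functions `P, Q, R` on `U` onto a non-flat linear 3-web with slope
functions `P', Q', R'`, sending leaves to leaves, then `car` is preserved:
`car_W(M) = car_{W̄}(ψ M)` for every `M ∈ U`. -/
theorem car_projective_invariant (U : Set (ℝ × ℝ)) (hU : IsOpen U)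
    (A : Matrix (Fin 3) (Fin 3) ℝ) (hA : IsUnit A.det)
    (ψ : ℝ × ℝ → ℝ × ℝ)
    (hden : ∀ M ∈ U, A 2 0 * M.1 + A 2 1 * M.2 + A 2 2 ≠ 0)
    (hψ : ∀ M ∈ U, ψ M =
      ((A 0 0 * M.1 + A 0 1 * M.2 + A 0 2) / (A 2 0 * M.1 + A 2 1 * M.2 + A 2 2),
       (A 1 0 * M.1 + A 1 1 * M.2 + A 1 2) / (A 2 0 * M.1 + A 2 1 * M.2 + A 2 2)))
    (P Q R P' Q' R' : ℝ × ℝ → ℝ)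
    (hP : AnalyticOnNhd ℝ P U) (hQ : AnalyticOnNhd ℝ Q U) (hR : AnalyticOnNhd ℝ R U)
    (hP' : AnalyticOnNhd ℝ P' (ψ '' U)) (hQ' : AnalyticOnNhd ℝ Q' (ψ '' U))
    (hR' : AnalyticOnNhd ℝ R' (ψ '' U))
    -- the webs are linear: slopes are constant along the leaves
    (hlinP : ∀ M ∈ U, pdx P M + P M * pdy P M = 0)
    (hlinQ : ∀ M ∈ U, pdx Q M + Q M * pdy Q M = 0)
    (hlinR : ∀ M ∈ U, pdx R M + R M * pdy R M = 0)
    (hlinP' : ∀ M ∈ ψ '' U, pdx P' M + P' M * pdy P' M = 0)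
    (hlinQ' : ∀ M ∈ ψ '' U, pdx Q' M + Q' M * pdy Q' M = 0)
    (hlinR' : ∀ M ∈ ψ '' U, pdx R' M + R' M * pdy R' M = 0)
    -- the webs are 3-webs with Δ nonvanishing (non-flatness, via Agafonov's Lemma 1)
    (hPQ : ∀ M ∈ U, P M ≠ Q M) (hQR : ∀ M ∈ U, Q M ≠ R M) (hRP : ∀ M ∈ U, R M ≠ P M)
    (hΔ : ∀ M ∈ U, webDelta P Q R M ≠ 0)
    (hΔ' : ∀ M ∈ ψ '' U, webDelta P' Q' R' M ≠ 0)
    -- ψ sends leaves of the first web to leaves of the second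
    (hmapP : ∀ M ∈ U,
      (fderiv ℝ ψ M (1, P M)).2 = P' (ψ M) * (fderiv ℝ ψ M (1, P M)).1)
    (hmapQ : ∀ M ∈ U,
      (fderiv ℝ ψ M (1, Q M)).2 = Q' (ψ M) * (fderiv ℝ ψ M (1, Q M)).1)
    (hmapR : ∀ M ∈ U,
      (fderiv ℝ ψ M (1, R M)).2 = R' (ψ M) * (fderiv ℝ ψ M (1, R M)).1) :
    ∀ M ∈ U, webCar P Q R M = webCar P' Q' R' (ψ M) := by
  intro M hM
  obtain ⟨hsP, hP1, hP2, hP3⟩ := slope_transform U hU A hA ψ hden hψ P P' hP hP' hlinP hmapP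
    (A 0 0 * A 2 1 - A 0 1 * A 2 0) (A 1 0 * A 2 1 - A 1 1 * A 2 0)
    (A 0 0 * A 2 2 - A 0 2 * A 2 0) (A 0 1 * A 2 2 - A 0 2 * A 2 1)
    (A 1 0 * A 2 2 - A 1 2 * A 2 0) (A 1 1 * A 2 2 - A 1 2 * A 2 1)
    rfl rfl rfl rfl rfl rfl M hM
  obtain ⟨hsQ, hQ1, hQ2, hQ3⟩ := slope_transform U hU A hA ψ hden hψ Q Q' hQ hQ' hlinQ hmapQ
    (A 0 0 * A 2 1 - A 0 1 * A 2 0) (A 1 0 * A 2 1 - A 1 1 * A 2 0)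
    (A 0 0 * A 2 2 - A 0 2 * A 2 0) (A 0 1 * A 2 2 - A 0 2 * A 2 1)
    (A 1 0 * A 2 2 - A 1 2 * A 2 0) (A 1 1 * A 2 2 - A 1 2 * A 2 1)
    rfl rfl rfl rfl rfl rfl M hM
  obtain ⟨hsR, hR1, hR2, hR3⟩ := slope_transform U hU A hA ψ hden hψ R R' hR hR' hlinR hmapR
    (A 0 0 * A 2 1 - A 0 1 * A 2 0) (A 1 0 * A 2 1 - A 1 1 * A 2 0)
    (A 0 0 * A 2 2 - A 0 2 * A 2 0) (A 0 1 * A 2 2 - A 0 2 * A 2 1)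
    (A 1 0 * A 2 2 - A 1 2 * A 2 0) (A 1 1 * A 2 2 - A 1 2 * A 2 1)
    rfl rfl rfl rfl rfl rfl M hM
  have hD : (P M - Q M) * pdy R M + (Q M - R M) * pdy P M + (R M - P M) * pdy Q M ≠ 0 :=
    hΔ M hM
  have hdet : ((A 0 0 * A 2 1 - A 0 1 * A 2 0) * M.2 + (A 0 0 * A 2 2 - A 0 2 * A 2 0)) *
        (-(A 1 0 * A 2 1 - A 1 1 * A 2 0) * M.1 + (A 1 1 * A 2 2 - A 1 2 * A 2 1)) -
      (-(A 0 0 * A 2 1 - A 0 1 * A 2 0) * M.1 + (A 0 1 * A 2 2 - A 0 2 * A 2 1)) *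
        ((A 1 0 * A 2 1 - A 1 1 * A 2 0) * M.2 + (A 1 0 * A 2 2 - A 1 2 * A 2 0))
      = (A 2 0 * M.1 + A 2 1 * M.2 + A 2 2) * A.det := by
    rw [Matrix.det_fin_three]
    ring
  have key := web_assembly
    ((A 0 0 * A 2 1 - A 0 1 * A 2 0) * M.2 + (A 0 0 * A 2 2 - A 0 2 * A 2 0))
    (-(A 0 0 * A 2 1 - A 0 1 * A 2 0) * M.1 + (A 0 1 * A 2 2 - A 0 2 * A 2 1))
    ((A 1 0 * A 2 1 - A 1 1 * A 2 0) * M.2 + (A 1 0 * A 2 2 - A 1 2 * A 2 0))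
    (-(A 1 0 * A 2 1 - A 1 1 * A 2 0) * M.1 + (A 1 1 * A 2 2 - A 1 2 * A 2 1))
    (A 2 0 * M.1 + A 2 1 * M.2 + A 2 2) (A.det)
    (A 0 0 * A 2 1 - A 0 1 * A 2 0) (A 1 0 * A 2 1 - A 1 1 * A 2 0)
    (P M) (pdy P M) (pdy (pdy P) M) (Q M) (pdy Q M) (pdy (pdy Q) M)
    (R M) (pdy R M) (pdy (pdy R) M)
    hdet (hden M hM) hA.ne_zero hsP hsQ hsR hD
  show (P M - Q M) * (Q M - R M) * (R M - P M) *
      (pdy (pdy P) M + pdy (pdy Q) M + pdy (pdy R) M) /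
      ((P M - Q M) * pdy R M + (Q M - R M) * pdy P M + (R M - P M) * pdy Q M) ^ 2
    = (P' (ψ M) - Q' (ψ M)) * (Q' (ψ M) - R' (ψ M)) * (R' (ψ M) - P' (ψ M)) *
      (pdy (pdy P') (ψ M) + pdy (pdy Q') (ψ M) + pdy (pdy R') (ψ M)) /
      ((P' (ψ M) - Q' (ψ M)) * pdy R' (ψ M) + (Q' (ψ M) - R' (ψ M)) * pdy P' (ψ M) +
        (R' (ψ M) - P' (ψ M)) * pdy Q' (ψ M)) ^ 2
  rw [hP1, hQ1, hR1, hP2, hQ2, hR2, hP3, hQ3, hR3]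
  exact key.symm
end
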